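/- arXiv:math-ph/0402013 — 5 statements merged into one kernel-verified Lean document; each statement's English description precedes it below -/
import Mathlib

section
/- Let 0 < η < η₀ and let g : ℂ → ℂ be such that the functions ξ ↦ g(−ξ + iη) and ξ ↦ g(ξ − iη) belong to L¹ ∩ L² on (η, ∞), and α ↦ g(α − iα) belongs to L² on (−η, η). Define h : ℝ → ℂ by h(t) = e^{−η₀|t|} ∫_γ e^{itz} g(z) dz. Then h ∈ L²(ℝ). -/
open Complex MeasureTheory Set

/-- The contour integral over the contour
`γ = {−ξ + iη : ξ ≥ η} ∪ {α − iα : −η ≤ α ≤ η} ∪ {ξ − iη : ξ ≥ η}`. -/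
noncomputable def contourIntegral (η : ℝ) (F : ℂ → ℂ) : ℂ :=
  (∫ ξ in Ioi η, F (-(ξ : ℂ) + (η : ℂ) * I))
  + (1 - I) * (∫ α in (-η)..η, F ((α : ℂ) - (α : ℂ) * I))
  + ∫ ξ in Ioi η, F ((ξ : ℂ) - (η : ℂ) * I)

lemma my_integrable_exp_neg_mul_abs {b : ℝ} (hb : 0 < b) :
    Integrable (fun t : ℝ => Real.exp (-b * |t|)) := by
  have hIoi : IntegrableOn (fun t : ℝ => Real.exp (-b * |t|)) (Ioi 0) :=
    (exp_neg_integrableOn_Ioi 0 hb).congr_fun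
      (fun x hx => by rw [abs_of_pos (mem_Ioi.1 hx)]) measurableSet_Ioi
  have hIic : IntegrableOn (fun t : ℝ => Real.exp (-b * |t|)) (Iic 0) := by
    rw [← Measure.map_neg_eq_self (volume : Measure ℝ)]
    have m : MeasurableEmbedding fun x : ℝ => -x := (Homeomorph.neg ℝ).measurableEmbedding
    rw [m.integrableOn_map_iff]
    simp_rw [Function.comp_def, abs_neg, neg_preimage, neg_Iic, neg_zero]
    exact Iff.mpr integrableOn_Ici_iff_integrableOn_Ioi hIoi
  have := hIic.union hIoi
  rwa [Iic_union_Ioi, integrableOn_univ] at this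

lemma my_memLp_exp (a : ℝ) (ha : a < 0) :
    MemLp (fun t : ℝ => Real.exp (a * |t|)) 2 volume := by
  have hc : Continuous fun t : ℝ => Real.exp (a * |t|) := by fun_prop
  rw [memLp_two_iff_integrable_sq hc.aestronglyMeasurable]
  have : (fun t : ℝ => Real.exp (a * |t|) ^ 2) = fun t : ℝ => Real.exp (-(-2 * a) * |t|) := by
    funext t; rw [sq, ← Real.exp_add]; ring_nf
  rw [this]
  exact my_integrable_exp_neg_mul_abs (by linarith)

theorem stmt2 (η η₀ : ℝ) (hη : 0 < η) (hηη₀ : η < η₀) (g : ℂ → ℂ)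
    (hg1 : IntegrableOn (fun ξ : ℝ => g (-(ξ : ℂ) + (η : ℂ) * I)) (Ioi η))
    (hg1' : MemLp (fun ξ : ℝ => g (-(ξ : ℂ) + (η : ℂ) * I)) 2 (volume.restrict (Ioi η)))
    (hg2 : IntegrableOn (fun ξ : ℝ => g ((ξ : ℂ) - (η : ℂ) * I)) (Ioi η))
    (hg2' : MemLp (fun ξ : ℝ => g ((ξ : ℂ) - (η : ℂ) * I)) 2 (volume.restrict (Ioi η)))
    (hg3 : MemLp (fun α : ℝ => g ((α : ℂ) - (α : ℂ) * I)) 2 (volume.restrict (Ioo (-η) η)))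
    (h : ℝ → ℂ)
    (hdef : ∀ t : ℝ, h t = Real.exp (-η₀ * |t|)
      * contourIntegral η (fun z => Complex.exp (I * (t : ℂ) * z) * g z)) :
    MemLp h 2 volume := by
  have hle : -η ≤ η := by linarith
  -- integrability of g on the diagonal segment
  have hg3i : IntegrableOn (fun α : ℝ => g ((α : ℂ) - (α : ℂ) * I)) (Ioc (-η) η) := by
    have hfin : IsFiniteMeasure (volume.restrict (Ioo (-η) η)) := by
      constructor
      rw [Measure.restrict_apply_univ]
      exact measure_Ioo_lt_top
    have h2 := hg3.integrable (by norm_num)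
    rwa [IntegrableOn, ← Measure.restrict_congr_set Ioo_ae_eq_Ioc]
  -- constants
  set K1 := ∫ ξ in Ioi η, ‖g (-(ξ : ℂ) + (η : ℂ) * I)‖ with hK1
  set K2 := ∫ α in Ioc (-η) η, ‖g ((α : ℂ) - (α : ℂ) * I)‖ with hK2
  set K3 := ∫ ξ in Ioi η, ‖g ((ξ : ℂ) - (η : ℂ) * I)‖ with hK3
  set C := K1 + 2 * K2 + K3 with hC
  -- pointwise norms of the exponential factors
  have e1 : ∀ t ξ : ℝ, ‖Complex.exp (I * (t : ℂ) * (-(ξ : ℂ) + (η : ℂ) * I))‖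
      = Real.exp (-(t * η)) := by
    intro t ξ
    rw [Complex.norm_exp]
    congr 1
    simp [Complex.mul_re, Complex.mul_im]
  have e3 : ∀ t ξ : ℝ, ‖Complex.exp (I * (t : ℂ) * ((ξ : ℂ) - (η : ℂ) * I))‖
      = Real.exp (t * η) := by
    intro t ξ
    rw [Complex.norm_exp]
    congr 1
    simp [Complex.mul_re, Complex.mul_im]
  have e2 : ∀ t α : ℝ, ‖Complex.exp (I * (t : ℂ) * ((α : ℂ) - (α : ℂ) * I))‖
      = Real.exp (t * α) := by
    intro t α
    rw [Complex.norm_exp]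
    congr 1
    simp [Complex.mul_re, Complex.mul_im]
  -- bounds on the three pieces
  have b1 : ∀ t : ℝ, ‖∫ ξ in Ioi η,
      Complex.exp (I * (t : ℂ) * (-(ξ : ℂ) + (η : ℂ) * I)) * g (-(ξ : ℂ) + (η : ℂ) * I)‖
      ≤ Real.exp (η * |t|) * K1 := by
    intro t
    calc ‖∫ ξ in Ioi η, Complex.exp (I * (t : ℂ) * (-(ξ : ℂ) + (η : ℂ) * I))
          * g (-(ξ : ℂ) + (η : ℂ) * I)‖
        ≤ ∫ ξ in Ioi η, ‖Complex.exp (I * (t : ℂ) * (-(ξ : ℂ) + (η : ℂ) * I))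
          * g (-(ξ : ℂ) + (η : ℂ) * I)‖ := norm_integral_le_integral_norm _
      _ ≤ ∫ ξ in Ioi η, Real.exp (η * |t|) * ‖g (-(ξ : ℂ) + (η : ℂ) * I)‖ := by
          refine integral_mono_of_nonneg (ae_of_all _ fun ξ => norm_nonneg _)
            (hg1.norm.const_mul _) (ae_of_all _ fun ξ => ?_)
          dsimp only
          rw [norm_mul, e1]
          refine mul_le_mul_of_nonneg_right ?_ (norm_nonneg _)
          exact Real.exp_le_exp.2 (by nlinarith [neg_abs_le t, abs_nonneg t])
      _ = Real.exp (η * |t|) * K1 := integral_const_mul _ _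
  have b3 : ∀ t : ℝ, ‖∫ ξ in Ioi η,
      Complex.exp (I * (t : ℂ) * ((ξ : ℂ) - (η : ℂ) * I)) * g ((ξ : ℂ) - (η : ℂ) * I)‖
      ≤ Real.exp (η * |t|) * K3 := by
    intro t
    calc ‖∫ ξ in Ioi η, Complex.exp (I * (t : ℂ) * ((ξ : ℂ) - (η : ℂ) * I))
          * g ((ξ : ℂ) - (η : ℂ) * I)‖
        ≤ ∫ ξ in Ioi η, ‖Complex.exp (I * (t : ℂ) * ((ξ : ℂ) - (η : ℂ) * I))
          * g ((ξ : ℂ) - (η : ℂ) * I)‖ := norm_integral_le_integral_norm _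
      _ ≤ ∫ ξ in Ioi η, Real.exp (η * |t|) * ‖g ((ξ : ℂ) - (η : ℂ) * I)‖ := by
          refine integral_mono_of_nonneg (ae_of_all _ fun ξ => norm_nonneg _)
            (hg2.norm.const_mul _) (ae_of_all _ fun ξ => ?_)
          dsimp only
          rw [norm_mul, e3]
          refine mul_le_mul_of_nonneg_right ?_ (norm_nonneg _)
          exact Real.exp_le_exp.2 (by nlinarith [le_abs_self t, abs_nonneg t])
      _ = Real.exp (η * |t|) * K3 := integral_const_mul _ _
  have b2 : ∀ t : ℝ, ‖∫ α in (-η)..η,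
      Complex.exp (I * (t : ℂ) * ((α : ℂ) - (α : ℂ) * I)) * g ((α : ℂ) - (α : ℂ) * I)‖
      ≤ Real.exp (η * |t|) * K2 := by
    intro t
    rw [intervalIntegral.integral_of_le hle]
    calc ‖∫ α in Ioc (-η) η, Complex.exp (I * (t : ℂ) * ((α : ℂ) - (α : ℂ) * I))
          * g ((α : ℂ) - (α : ℂ) * I)‖
        ≤ ∫ α in Ioc (-η) η, ‖Complex.exp (I * (t : ℂ) * ((α : ℂ) - (α : ℂ) * I))
          * g ((α : ℂ) - (α : ℂ) * I)‖ := norm_integral_le_integral_norm _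
      _ ≤ ∫ α in Ioc (-η) η, Real.exp (η * |t|) * ‖g ((α : ℂ) - (α : ℂ) * I)‖ := by
          refine integral_mono_of_nonneg (ae_of_all _ fun α => norm_nonneg _)
            (hg3i.norm.const_mul _)
            (((ae_restrict_iff' measurableSet_Ioc).2 (ae_of_all _ fun α hα => ?_)))
          dsimp only
          rw [norm_mul, e2]
          refine mul_le_mul_of_nonneg_right ?_ (norm_nonneg _)
          refine Real.exp_le_exp.2 ?_
          have h1 : |α| ≤ η := abs_le.2 ⟨hα.1.le, hα.2⟩
          calc t * α ≤ |t * α| := le_abs_self _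
            _ = |t| * |α| := abs_mul t α
            _ ≤ |t| * η := by nlinarith [abs_nonneg t]
            _ = η * |t| := mul_comm _ _
      _ = Real.exp (η * |t|) * K2 := integral_const_mul _ _
  -- the key pointwise bound
  have key : ∀ t : ℝ, ‖h t‖ ≤ C * Real.exp ((η - η₀) * |t|) := by
    intro t
    rw [hdef t, norm_mul, Complex.norm_real, Real.norm_eq_abs, Real.abs_exp]
    have hcontour : ‖contourIntegral η (fun z => Complex.exp (I * (t : ℂ) * z) * g z)‖
        ≤ Real.exp (η * |t|) * C := by
      rw [contourIntegral]
      refine (norm_add_le _ _).trans ?_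
      refine le_trans (add_le_add (norm_add_le _ _) (b3 t)) ?_
      have hmid : ‖(1 - I) * ∫ α in (-η)..η,
          Complex.exp (I * (t : ℂ) * ((α : ℂ) - (α : ℂ) * I)) * g ((α : ℂ) - (α : ℂ) * I)‖
          ≤ 2 * (Real.exp (η * |t|) * K2) := by
        rw [norm_mul]
        have h1I : ‖(1 - I : ℂ)‖ ≤ 2 := by
          refine (norm_sub_le _ _).trans ?_
          rw [norm_one, Complex.norm_I]
          norm_num
        exact mul_le_mul h1I (b2 t) (norm_nonneg _) (by norm_num)
      calc ‖_‖ + ‖_‖ + _ ≤ Real.exp (η * |t|) * K1 + 2 * (Real.exp (η * |t|) * K2)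
            + Real.exp (η * |t|) * K3 := add_le_add (add_le_add (b1 t) hmid) le_rfl
        _ = Real.exp (η * |t|) * C := by rw [hC]; ring
    calc Real.exp (-η₀ * |t|)
          * ‖contourIntegral η (fun z => Complex.exp (I * (t : ℂ) * z) * g z)‖
        ≤ Real.exp (-η₀ * |t|) * (Real.exp (η * |t|) * C) :=
          mul_le_mul_of_nonneg_left hcontour (Real.exp_nonneg _)
      _ = C * Real.exp ((η - η₀) * |t|) := by rw [← mul_assoc, ← Real.exp_add]; ring_nf
  -- measurability of h
  have hmeas : AEStronglyMeasurable h volume := by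
    have hcongr : ∀ t : ℝ, h t = (Real.exp (-η₀ * |t|) : ℂ)
        * ((∫ ξ in Ioi η, Complex.exp (I * (t : ℂ) * (-(ξ : ℂ) + (η : ℂ) * I))
            * g (-(ξ : ℂ) + (η : ℂ) * I))
          + (1 - I) * (∫ α in Ioc (-η) η, Complex.exp (I * (t : ℂ) * ((α : ℂ) - (α : ℂ) * I))
            * g ((α : ℂ) - (α : ℂ) * I))
          + ∫ ξ in Ioi η, Complex.exp (I * (t : ℂ) * ((ξ : ℂ) - (η : ℂ) * I))
            * g ((ξ : ℂ) - (η : ℂ) * I)) := by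
      intro t
      rw [hdef t, contourIntegral, intervalIntegral.integral_of_le hle]
    have m1 : AEStronglyMeasurable (fun t : ℝ => ∫ ξ in Ioi η,
        Complex.exp (I * (t : ℂ) * (-(ξ : ℂ) + (η : ℂ) * I)) * g (-(ξ : ℂ) + (η : ℂ) * I))
        volume := by
      apply AEStronglyMeasurable.integral_prod_right'
        (f := fun p : ℝ × ℝ => Complex.exp (I * (p.1 : ℂ) * (-(p.2 : ℂ) + (η : ℂ) * I))
          * g (-(p.2 : ℂ) + (η : ℂ) * I))
      exact (Continuous.aestronglyMeasurable (by fun_prop)).mul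
        hg1.aestronglyMeasurable.comp_snd
    have m3 : AEStronglyMeasurable (fun t : ℝ => ∫ ξ in Ioi η,
        Complex.exp (I * (t : ℂ) * ((ξ : ℂ) - (η : ℂ) * I)) * g ((ξ : ℂ) - (η : ℂ) * I))
        volume := by
      apply AEStronglyMeasurable.integral_prod_right'
        (f := fun p : ℝ × ℝ => Complex.exp (I * (p.1 : ℂ) * ((p.2 : ℂ) - (η : ℂ) * I))
          * g ((p.2 : ℂ) - (η : ℂ) * I))
      exact (Continuous.aestronglyMeasurable (by fun_prop)).mul
        hg2.aestronglyMeasurable.comp_snd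
    have m2 : AEStronglyMeasurable (fun t : ℝ => ∫ α in Ioc (-η) η,
        Complex.exp (I * (t : ℂ) * ((α : ℂ) - (α : ℂ) * I)) * g ((α : ℂ) - (α : ℂ) * I))
        volume := by
      apply AEStronglyMeasurable.integral_prod_right'
        (f := fun p : ℝ × ℝ => Complex.exp (I * (p.1 : ℂ) * ((p.2 : ℂ) - (p.2 : ℂ) * I))
          * g ((p.2 : ℂ) - (p.2 : ℂ) * I))
      exact (Continuous.aestronglyMeasurable (by fun_prop)).mul
        hg3i.aestronglyMeasurable.comp_snd
    have : AEStronglyMeasurable (fun t : ℝ => (Real.exp (-η₀ * |t|) : ℂ)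
        * ((∫ ξ in Ioi η, Complex.exp (I * (t : ℂ) * (-(ξ : ℂ) + (η : ℂ) * I))
            * g (-(ξ : ℂ) + (η : ℂ) * I))
          + (1 - I) * (∫ α in Ioc (-η) η, Complex.exp (I * (t : ℂ) * ((α : ℂ) - (α : ℂ) * I))
            * g ((α : ℂ) - (α : ℂ) * I))
          + ∫ ξ in Ioi η, Complex.exp (I * (t : ℂ) * ((ξ : ℂ) - (η : ℂ) * I))
            * g ((ξ : ℂ) - (η : ℂ) * I))) volume := by
      refine (Continuous.aestronglyMeasurable (by fun_prop)).mul ?_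
      exact (m1.add (m2.const_mul _)).add m3
    exact this.congr (ae_of_all _ fun t => (hcongr t).symm)
  -- conclude
  refine MemLp.of_le_mul (c := C) (my_memLp_exp (η - η₀) (by linarith)) hmeas
    (ae_of_all _ fun t => ?_)
  rw [Real.norm_eq_abs, Real.abs_exp]
  exact key t
end

section
/- Let η > 0 and let Γ denote the open set between the real axis and the contour γ. Let g be a function which is continuous on the closure of Γ, complex-analytic on Γ, and satisfies |g(z)| ≤ C(1 + |Re z|)^{−2} on the closure of Γ for some constant C. Then for every t ∈ ℝ, ∫_{−∞}^{∞} e^{itx} g(x) dx = ∫_γ e^{itz} g(z) dz. -/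
open Complex MeasureTheory Set

/-- The open region `Γ` between the real axis and the contour `γ`. -/
def GammaRegion (η : ℝ) : Set ℂ :=
  {z | z.re < 0 ∧ 0 < z.im ∧ z.im < min (-z.re) η}
  ∪ {z | 0 < z.re ∧ -min z.re η < z.im ∧ z.im < 0}

open Filter Topology
open scoped Interval

namespace Stmt3Aux

/-- The right half of the region. -/
def Rg (η : ℝ) : Set ℂ := {z | 0 < z.re ∧ -min z.re η < z.im ∧ z.im < 0}

/-- The closed version. -/
def Kg (η : ℝ) : Set ℂ := {z | 0 ≤ z.re ∧ -min z.re η ≤ z.im ∧ z.im ≤ 0}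

lemma isOpen_Rg (η : ℝ) : IsOpen (Rg η) := by
  have h1 : IsOpen {z : ℂ | 0 < z.re} := isOpen_lt continuous_const continuous_re
  have h2 : IsOpen {z : ℂ | -min z.re η < z.im} :=
    isOpen_lt (by fun_prop) continuous_im
  have h3 : IsOpen {z : ℂ | z.im < 0} := isOpen_lt continuous_im continuous_const
  have : Rg η = ({z : ℂ | 0 < z.re} ∩ {z : ℂ | -min z.re η < z.im}) ∩ {z : ℂ | z.im < 0} := by
    ext z; simp [Rg, and_assoc]
  rw [this]
  exact (h1.inter h2).inter h3

lemma mem_Kg {η : ℝ} {z : ℂ} (h1 : 0 ≤ z.re) (h2 : -z.re ≤ z.im)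
    (h2' : -η ≤ z.im) (h3 : z.im ≤ 0) : z ∈ Kg η := by
  refine ⟨h1, ?_, h3⟩
  rcases min_cases z.re η with ⟨hm, _⟩ | ⟨hm, _⟩ <;> rw [hm] <;> linarith

lemma Kg_subset_closure {η : ℝ} (hη : 0 < η) : Kg η ⊆ closure (Rg η) := by
  intro z hz
  obtain ⟨h1, h2, h3⟩ := hz
  set ε : ℕ → ℝ := fun n => 1 / (n + 1) with hε
  have hεpos : ∀ n, 0 < ε n := fun n => by positivity
  have hεle1 : ∀ n, ε n ≤ 1 := fun n => by
    rw [hε]; rw [div_le_one (by positivity)]; simp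
  have hεlim : Tendsto ε atTop (𝓝 0) := tendsto_one_div_add_atTop_nhds_zero_nat
  set w : ℕ → ℂ := fun n => z + (ε n : ℂ) * (1 + ((-z.im - ε n / 2 : ℝ) : ℂ) * I) with hw
  have hwre : ∀ n, (w n).re = z.re + ε n := by
    intro n; simp [hw]
  have hwim : ∀ n, (w n).im = (1 - ε n) * z.im - (ε n) ^ 2 / 2 := by
    intro n; simp [hw]; ring
  have hlim : Tendsto w atTop (𝓝 z) := by
    have : Tendsto (fun n => ((ε n : ℝ) : ℂ)) atTop (𝓝 0) := by
      have h := (Complex.continuous_ofReal.tendsto 0).comp hεlim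
      rw [Complex.ofReal_zero] at h
      exact h
    have h2 : Tendsto (fun n => ((ε n : ℂ) * (1 + ((-z.im - ε n / 2 : ℝ) : ℂ) * I)))
        atTop (𝓝 0) := by
      have hb : Tendsto (fun n => (1 + ((-z.im - ε n / 2 : ℝ) : ℂ) * I)) atTop
          (𝓝 (1 + ((-z.im - 0 / 2 : ℝ) : ℂ) * I)) := by
        refine Tendsto.add tendsto_const_nhds (Tendsto.mul_const _ ?_)
        exact (Complex.continuous_ofReal.tendsto _).comp
          (by simpa using (tendsto_const_nhds.sub (hεlim.div_const 2)))
      simpa using this.mul hb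
    have := (tendsto_const_nhds (x := z)).add h2
    rw [add_zero] at this
    exact this
  refine mem_closure_of_tendsto hlim ?_
  have hev : ∀ᶠ n in atTop, ε n ≤ η := by
    filter_upwards [hεlim.eventually_lt_const hη] with n hn using hn.le
  filter_upwards [hev] with n hn
  have hε1 := hεpos n
  have hε2 := hεle1 n
  have hmin : min z.re η ≤ min (z.re + ε n) η := min_le_min (by linarith) le_rfl
  have hεm : ε n ≤ min (z.re + ε n) η := le_min (by linarith) hn
  refine ⟨by rw [hwre]; linarith, ?_, ?_⟩
  · rw [hwre, hwim]
    have hmη : min z.re η ≤ η := min_le_right _ _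
    nlinarith [hεm, h2, hε1]
  · rw [hwim]; nlinarith [h3, hε1, hε2]



variable {η : ℝ} {F : ℂ → ℂ} {D : ℝ}

lemma contOn_Kg (hη : 0 < η) (hc : ContinuousOn F (closure (Rg η))) :
    ContinuousOn F (Kg η) := hc.mono (Kg_subset_closure hη)

/-- Interval integrability of `F` along a continuous path staying in `Kg η`. -/
lemma II (hη : 0 < η) (hc : ContinuousOn F (closure (Rg η))) {a b : ℝ} {p : ℝ → ℂ}
    (hp : Continuous p) (hmem : ∀ x ∈ uIcc a b, p x ∈ Kg η) :
    IntervalIntegrable (fun x => F (p x)) volume a b :=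
  (ContinuousOn.comp (contOn_Kg hη hc) hp.continuousOn hmem).intervalIntegrable

/-- Cauchy's theorem on the rectangle `[a,b] × [-c,0]`. -/
lemma rect (hη : 0 < η) (hc : ContinuousOn F (closure (Rg η)))
    (hd : DifferentiableOn ℂ F (Rg η)) {a b c : ℝ}
    (h0 : 0 ≤ a) (hab : a ≤ b) (hc0 : 0 ≤ c) (hca : c ≤ a) (hcη : c ≤ η) :
    (∫ x in a..b, F (x - c * I)) - (∫ x in a..b, F x)
      + I * (∫ y in (-c)..(0:ℝ), F (b + y * I))
      - I * (∫ y in (-c)..(0:ℝ), F (a + y * I)) = 0 := by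
  have hKsub : Kg η ⊆ closure (Rg η) := Kg_subset_closure hη
  have Hc : ContinuousOn F ([[(⟨a, -c⟩ : ℂ).re, (⟨b, 0⟩ : ℂ).re]] ×ℂ
      [[(⟨a, -c⟩ : ℂ).im, (⟨b, 0⟩ : ℂ).im]]) := by
    refine (hc.mono hKsub).mono ?_
    intro z hz
    rw [Complex.mem_reProdIm] at hz
    obtain ⟨hz1, hz2⟩ := hz
    simp only [uIcc_of_le (show (⟨a, -c⟩ : ℂ).re ≤ (⟨b, 0⟩ : ℂ).re from hab),
      uIcc_of_le (show (⟨a, -c⟩ : ℂ).im ≤ (⟨b, 0⟩ : ℂ).im from by simpa using hc0)] at hz1 hz2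
    have hz3 : a ≤ z.re := hz1.1
    have hz4 : z.re ≤ b := hz1.2
    have hz5 : -c ≤ z.im := hz2.1
    have hz6 : z.im ≤ 0 := hz2.2
    exact mem_Kg (by linarith) (by linarith) (by linarith) (by linarith)
  have Hd : DifferentiableOn ℂ F
      (Ioo (min (⟨a, -c⟩ : ℂ).re (⟨b, 0⟩ : ℂ).re) (max (⟨a, -c⟩ : ℂ).re (⟨b, 0⟩ : ℂ).re) ×ℂ
       Ioo (min (⟨a, -c⟩ : ℂ).im (⟨b, 0⟩ : ℂ).im) (max (⟨a, -c⟩ : ℂ).im (⟨b, 0⟩ : ℂ).im)) := by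
    refine hd.mono ?_
    intro z hz
    rw [Complex.mem_reProdIm] at hz
    have hz3 : min a b < z.re := hz.1.1
    have hz4 : z.re < max a b := hz.1.2
    have hz5 : min (-c) 0 < z.im := hz.2.1
    have hz6 : z.im < max (-c) 0 := hz.2.2
    rw [min_eq_left hab] at hz3
    rw [min_eq_left (show -c ≤ (0:ℝ) by linarith)] at hz5
    rw [max_eq_right (show -c ≤ (0:ℝ) by linarith)] at hz6
    refine ⟨by linarith, ?_, by linarith⟩
    have : c ≤ min z.re η := le_min (by linarith) hcη
    linarith
  have := Complex.integral_boundary_rect_eq_zero_of_continuousOn_of_differentiableOn F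
    ⟨a, -c⟩ ⟨b, 0⟩ Hc Hd
  simp only [show ((⟨a, -c⟩ : ℂ)).re = a from rfl, show ((⟨a, -c⟩ : ℂ)).im = -c from rfl,
    show ((⟨b, 0⟩ : ℂ)).re = b from rfl, show ((⟨b, 0⟩ : ℂ)).im = (0:ℝ) from rfl,
    Complex.ofReal_neg, neg_mul, Complex.ofReal_zero, zero_mul, add_zero, smul_eq_mul,
    ← sub_eq_add_neg] at this
  exact this


/-- Integrability of `F` along a horizontal ray inside the closed region. -/
lemma integrableOn_horiz (hη : 0 < η) (hc : ContinuousOn F (closure (Rg η))) (hD : 0 ≤ D)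
    (hb : ∀ z ∈ Kg η, ‖F z‖ ≤ D * ((1 + |z.re|) ^ 2)⁻¹) {a c : ℝ}
    (ha0 : 0 ≤ a) (hac : -a ≤ c) (hcη : -η ≤ c) (hc0 : c ≤ 0) :
    IntegrableOn (fun x : ℝ => F (x + c * I)) (Ioi a) := by
  have hmem : ∀ x ∈ Ici a, ((x : ℂ) + c * I) ∈ Kg η := by
    intro x hx
    simp only [mem_Ici] at hx
    refine mem_Kg ?_ ?_ ?_ ?_ <;> simp <;> linarith
  have hcont : ContinuousOn (fun x : ℝ => F (x + c * I)) (Ici a) :=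
    ContinuousOn.comp (contOn_Kg hη hc) (by fun_prop) hmem
  refine Integrable.mono' (g := fun x : ℝ => D * (1 + x ^ 2)⁻¹)
    (((integrable_inv_one_add_sq).const_mul D).integrableOn) ?_ ?_
  · exact ((hcont.mono Ioi_subset_Ici_self).aestronglyMeasurable measurableSet_Ioi)
  · rw [ae_restrict_iff' measurableSet_Ioi]
    filter_upwards with x hx
    have h1 := hb _ (hmem x (Ioi_subset_Ici_self hx))
    have h2 : ((x : ℂ) + c * I).re = x := by simp
    rw [h2] at h1
    refine h1.trans ?_
    have hle : (1:ℝ) + x ^ 2 ≤ (1 + |x|) ^ 2 := by nlinarith [abs_nonneg x, _root_.sq_abs x]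
    have hpos : (0:ℝ) < 1 + x ^ 2 := by positivity
    exact mul_le_mul_of_nonneg_left (inv_anti₀ hpos hle) hD

/-- Vanishing of the right vertical edge as `R → ∞`. -/
lemma vert_tendsto (hη : 0 < η) (hc : ContinuousOn F (closure (Rg η))) (hD : 0 ≤ D)
    (hb : ∀ z ∈ Kg η, ‖F z‖ ≤ D * ((1 + |z.re|) ^ 2)⁻¹) :
    Tendsto (fun R : ℝ => I * ∫ y in (-η)..(0:ℝ), F (R + y * I)) atTop (𝓝 0) := by
  have key : ∀ R : ℝ, η ≤ R →
      ‖I * ∫ y in (-η)..(0:ℝ), F (R + y * I)‖ ≤ D * ((1 + |R|) ^ 2)⁻¹ * η := by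
    intro R hR
    rw [norm_mul, Complex.norm_I, one_mul]
    have := intervalIntegral.norm_integral_le_of_norm_le_const
      (C := D * ((1 + |R|) ^ 2)⁻¹) (f := fun y : ℝ => F (R + y * I)) (a := -η) (b := 0) ?_
    · refine this.trans (le_of_eq ?_)
      rw [show |(0:ℝ) - -η| = η by rw [abs_eq_self.2 (by linarith)]; ring]
    · intro y hy
      rw [uIoc_of_le (by linarith : -η ≤ (0:ℝ))] at hy
      have h1 : ((R : ℂ) + y * I).re = R := by simp
      have := hb ((R : ℂ) + y * I) (mem_Kg (by simp; linarith) (by simp; linarith [hy.1.le, hy.2])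
        (by simp; linarith [hy.1.le]) (by simp [hy.2]))
      rwa [h1] at this
  have hbound : Tendsto (fun R : ℝ => D * ((1 + |R|) ^ 2)⁻¹ * η) atTop (𝓝 0) := by
    have h1 : Tendsto (fun R : ℝ => (1 + |R|) ^ 2) atTop atTop := by
      refine tendsto_atTop_mono (fun R => ?_) (tendsto_atTop_add_const_left atTop 1 tendsto_abs_atTop_atTop)
      nlinarith [abs_nonneg R]
    have h2 : Tendsto (fun R : ℝ => ((1 + |R|) ^ 2)⁻¹) atTop (𝓝 0) := h1.inv_tendsto_atTop
    have := (h2.const_mul D).mul_const η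
    simpa using this
  refine squeeze_zero_norm' ?_ hbound
  filter_upwards [eventually_ge_atTop η] with R hR using key R hR

/-- The identity for the far part: shifting the integral over `(η, ∞)` down to the contour. -/
lemma far (hη : 0 < η) (hc : ContinuousOn F (closure (Rg η)))
    (hd : DifferentiableOn ℂ F (Rg η)) (hD : 0 ≤ D)
    (hb : ∀ z ∈ Kg η, ‖F z‖ ≤ D * ((1 + |z.re|) ^ 2)⁻¹) :
    ∫ x in Ioi η, F x
      = (∫ ξ in Ioi η, F (ξ - η * I)) - I * ∫ y in (-η)..(0:ℝ), F (η + y * I) := by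
  have hIF : IntegrableOn (fun x : ℝ => F x) (Ioi η) := by
    have := integrableOn_horiz hη hc hD hb (a := η) (c := 0) hη.le (by linarith) (by linarith) le_rfl
    simpa using this
  have hIFη : IntegrableOn (fun x : ℝ => F (x - η * I)) (Ioi η) := by
    have := integrableOn_horiz hη hc hD hb (a := η) (c := -η) hη.le (by linarith) (by linarith)
      (by linarith)
    simpa [Complex.ofReal_neg, neg_mul, sub_eq_add_neg] using this
  have h1 : Tendsto (fun R : ℝ => ∫ x in η..R, F x) atTop (𝓝 (∫ x in Ioi η, F x)) :=
    intervalIntegral_tendsto_integral_Ioi η hIF tendsto_id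
  have h2 : Tendsto (fun R : ℝ => ∫ x in η..R, F (x - η * I)) atTop
      (𝓝 (∫ x in Ioi η, F (x - η * I))) :=
    intervalIntegral_tendsto_integral_Ioi η hIFη tendsto_id
  have h3 := vert_tendsto hη hc hD hb
  have h4 : Tendsto (fun R : ℝ => (∫ x in η..R, F (x - η * I))
      + I * (∫ y in (-η)..(0:ℝ), F (R + y * I))
      - I * (∫ y in (-η)..(0:ℝ), F (η + y * I))) atTop
      (𝓝 ((∫ x in Ioi η, F (x - η * I)) + 0 - I * ∫ y in (-η)..(0:ℝ), F (η + y * I))) :=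
    (h2.add h3).sub tendsto_const_nhds
  have heq : ∀ᶠ R in atTop, (∫ x in η..R, F (x - η * I))
      + I * (∫ y in (-η)..(0:ℝ), F (R + y * I))
      - I * (∫ y in (-η)..(0:ℝ), F (η + y * I)) = ∫ x in η..R, F x := by
    filter_upwards [eventually_ge_atTop η] with R hR
    have := rect (hη := hη) hc hd (a := η) (b := R) (c := η) hη.le hR hη.le le_rfl le_rfl
    linear_combination this
  have := h4.congr' heq
  have := tendsto_nhds_unique this h1
  rw [← this]
  ring

/-- The compact corner set. -/
def K0 (η : ℝ) : Set ℂ := Kg η ∩ {z | z.re ≤ η}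

lemma isCompact_K0 (hη : 0 < η) : IsCompact (K0 η) := by
  apply Metric.isCompact_of_isClosed_isBounded
  · have h1 : IsClosed {z : ℂ | 0 ≤ z.re} := isClosed_le continuous_const continuous_re
    have h2 : IsClosed {z : ℂ | -min z.re η ≤ z.im} := isClosed_le (by fun_prop) continuous_im
    have h3 : IsClosed {z : ℂ | z.im ≤ 0} := isClosed_le continuous_im continuous_const
    have h4 : IsClosed {z : ℂ | z.re ≤ η} := isClosed_le continuous_re continuous_const
    have : K0 η = (({z : ℂ | 0 ≤ z.re} ∩ {z : ℂ | -min z.re η ≤ z.im}) ∩ {z : ℂ | z.im ≤ 0})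
        ∩ {z : ℂ | z.re ≤ η} := by
      ext z; simp [K0, Kg, and_assoc]
    rw [this]
    exact ((h1.inter h2).inter h3).inter h4
  · refine (Metric.isBounded_closedBall (x := (0:ℂ)) (r := 2*η)).subset ?_
    intro z hz
    obtain ⟨⟨h1, h2, h3⟩, h4⟩ := hz
    rw [Metric.mem_closedBall, dist_zero_right]
    have hmr := min_le_right z.re η
    have him : -η ≤ z.im := by linarith
    have := Complex.norm_le_abs_re_add_abs_im z
    have hre : |z.re| ≤ η := abs_le.2 ⟨by linarith, h4⟩
    have him' : |z.im| ≤ η := abs_le.2 ⟨him, by linarith⟩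
    linarith

/-- Convergence of staircase sums to the diagonal integral. -/
lemma staircase_tendsto (hη : 0 < η) (hc : ContinuousOn F (closure (Rg η)))
    (z : ℕ → ℕ → ℝ → ℂ) (hzc : ∀ n k, Continuous (z n k))
    (hmem : ∀ n : ℕ, 0 < n → ∀ k < n, ∀ x ∈ uIcc ((k : ℝ) * (η / n)) (((k : ℝ) + 1) * (η / n)),
      z n k x ∈ K0 η ∧ ‖z n k x - ((x : ℂ) - x * I)‖ ≤ η / n) :
    Tendsto (fun n : ℕ => ∑ k ∈ Finset.range n,
        ∫ x in ((k : ℝ) * (η / n))..(((k : ℝ) + 1) * (η / n)), F (z n k x))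
      atTop (𝓝 (∫ x in (0:ℝ)..η, F ((x : ℂ) - x * I))) := by
  -- diagonal points are in K0
  have hdiag : ∀ x : ℝ, 0 ≤ x → x ≤ η → ((x : ℂ) - x * I) ∈ K0 η := by
    intro x h1 h2
    refine ⟨mem_Kg (by simp [h1]) (by simp) (by simp; linarith) (by simp [h1]), by simp [h2]⟩
  -- uniform continuity
  have hK0sub : K0 η ⊆ Kg η := inter_subset_left
  have hucont : UniformContinuousOn F (K0 η) :=
    (isCompact_K0 hη).uniformContinuousOn_of_continuous ((contOn_Kg hη hc).mono hK0sub)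
  rw [Metric.uniformContinuousOn_iff] at hucont
  rw [Metric.tendsto_atTop]
  intro ε hε
  have hε' : 0 < ε / (η + 1) := by positivity
  obtain ⟨δ₀, hδ₀, hmod⟩ := hucont (ε / (η + 1)) hε'
  obtain ⟨N₀, hN₀⟩ := exists_nat_gt (η / δ₀)
  refine ⟨max (N₀ + 1) 1, fun n hn => ?_⟩
  have hn1 : 1 ≤ n := le_trans (le_max_right _ _) hn
  have hnN : N₀ + 1 ≤ n := le_trans (le_max_left _ _) hn
  have hnpos : (0:ℝ) < n := by positivity
  set δ : ℝ := η / n with hδdef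
  have hδpos : 0 < δ := by positivity
  have hδsmall : δ < δ₀ := by
    rw [hδdef, div_lt_iff₀ hnpos]
    have h1 : (N₀ : ℝ) ≤ (n : ℝ) := by exact_mod_cast le_trans (Nat.le_succ _) hnN
    rw [div_lt_iff₀ hδ₀] at hN₀
    nlinarith
  have hnδ : (n : ℝ) * δ = η := by
    rw [hδdef]; field_simp
  have hkδη : ∀ k : ℕ, k ≤ n → (k : ℝ) * δ ≤ η := by
    intro k hk
    calc (k : ℝ) * δ ≤ (n : ℝ) * δ :=
          mul_le_mul_of_nonneg_right (by exact_mod_cast hk) hδpos.le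
    _ = η := hnδ
  have hmono : ∀ k : ℕ, (k : ℝ) * δ ≤ ((k : ℝ) + 1) * δ := by
    intro k; nlinarith [hδpos, Nat.cast_nonneg (α := ℝ) k]
  -- integrability of the diagonal integrand on each subinterval
  have hIIdiag : ∀ k < n, IntervalIntegrable (fun x : ℝ => F ((x : ℂ) - x * I)) volume
      ((k : ℝ) * δ) (((k : ℝ) + 1) * δ) := by
    intro k hk
    refine II hη hc (by fun_prop) ?_
    intro x hx
    rw [uIcc_of_le (hmono k)] at hx
    have h0 : 0 ≤ (k : ℝ) * δ := by positivity
    have h1 : ((k : ℝ) + 1) * δ ≤ η := by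
      have := hkδη (k + 1) hk; push_cast at this; linarith
    exact (hdiag x (by linarith [hx.1]) (by linarith [hx.2])).1
  -- integrability of the staircase integrand
  have hIIz : ∀ k < n, IntervalIntegrable (fun x : ℝ => F (z n k x)) volume
      ((k : ℝ) * δ) (((k : ℝ) + 1) * δ) := by
    intro k hk
    exact II hη hc (hzc n k) (fun x hx => hK0sub (hmem n (by omega) k hk x hx).1)
  -- the partition of the target integral
  have hT : (∫ x in (0:ℝ)..η, F ((x : ℂ) - x * I))
      = ∑ k ∈ Finset.range n, ∫ x in ((k : ℝ) * δ)..(((k : ℝ) + 1) * δ),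
          F ((x : ℂ) - x * I) := by
    have := intervalIntegral.sum_integral_adjacent_intervals (μ := volume)
      (f := fun x : ℝ => F ((x : ℂ) - x * I)) (a := fun k : ℕ => (k : ℝ) * δ) (n := n) ?_
    · rw [show ((0:ℕ) : ℝ) * δ = 0 by simp, hnδ] at this
      rw [← this]
      refine Finset.sum_congr rfl (fun k _ => ?_)
      congr 1
      push_cast; ring
    · intro k hk
      have := hIIdiag k hk
      convert this using 2
      push_cast; ring
  rw [dist_eq_norm, hT, ← Finset.sum_sub_distrib]
  have hbound : ∀ k ∈ Finset.range n,
      ‖(∫ x in ((k : ℝ) * δ)..(((k : ℝ) + 1) * δ), F (z n k x))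
        - ∫ x in ((k : ℝ) * δ)..(((k : ℝ) + 1) * δ), F ((x : ℂ) - x * I)‖
      ≤ ε / (η + 1) * δ := by
    intro k hk
    rw [Finset.mem_range] at hk
    rw [← intervalIntegral.integral_sub (hIIz k hk) (hIIdiag k hk)]
    have := intervalIntegral.norm_integral_le_of_norm_le_const
      (C := ε / (η + 1)) (f := fun x : ℝ => F (z n k x) - F ((x : ℂ) - x * I))
      (a := (k : ℝ) * δ) (b := ((k : ℝ) + 1) * δ) ?_
    · refine this.trans (le_of_eq ?_)
      congr 1
      rw [abs_of_pos (by nlinarith [hδpos])]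
      ring
    · intro x hx
      have hx' : x ∈ uIcc ((k : ℝ) * δ) (((k : ℝ) + 1) * δ) := uIoc_subset_uIcc hx
      have hm := hmem n (by omega) k hk x (by rwa [hδdef] at hx')
      rw [uIcc_of_le (hmono k)] at hx'
      have h0 : 0 ≤ (k : ℝ) * δ := by positivity
      have h1 : ((k : ℝ) + 1) * δ ≤ η := by
        have := hkδη (k + 1) hk; push_cast at this; linarith
      have hdg := hdiag x (by linarith [hx'.1]) (by linarith [hx'.2])
      have hdist : dist (z n k x) ((x : ℂ) - x * I) < δ₀ := by
        rw [Complex.dist_eq]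
        calc ‖z n k x - ((x : ℂ) - x * I)‖ ≤ η / n := hm.2
        _ < δ₀ := by rw [← hδdef]; exact hδsmall
      have := hmod (z n k x) hm.1 ((x : ℂ) - x * I) hdg hdist
      rw [dist_eq_norm] at this
      exact this.le
  calc ‖∑ k ∈ Finset.range n, ((∫ x in ((k : ℝ) * δ)..(((k : ℝ) + 1) * δ), F (z n k x))
        - ∫ x in ((k : ℝ) * δ)..(((k : ℝ) + 1) * δ), F ((x : ℂ) - x * I))‖
      ≤ ∑ k ∈ Finset.range n, ‖(∫ x in ((k : ℝ) * δ)..(((k : ℝ) + 1) * δ), F (z n k x))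
        - ∫ x in ((k : ℝ) * δ)..(((k : ℝ) + 1) * δ), F ((x : ℂ) - x * I)‖ :=
        norm_sum_le _ _
    _ ≤ ∑ _k ∈ Finset.range n, ε / (η + 1) * δ := Finset.sum_le_sum hbound
    _ = (n : ℝ) * (ε / (η + 1) * δ) := by rw [Finset.sum_const, Finset.card_range]; simp
    _ = ε / (η + 1) * ((n : ℝ) * δ) := by ring
    _ = ε / (η + 1) * η := by rw [hnδ]
    _ < ε := by rw [div_mul_eq_mul_div, div_lt_iff₀ (by positivity)]; nlinarith

lemma hmid_lemma (hη : 0 < η) (hc : ContinuousOn F (closure (Rg η))) {n : ℕ} (hn : 0 < n) :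
    (∑ k ∈ Finset.range n, ∫ x in ((k : ℝ) * (η / n))..(((k : ℝ) + 1) * (η / n)), F (x : ℂ))
      = ∫ x in (0:ℝ)..η, F (x : ℂ) := by
  have hnpos : (0:ℝ) < n := by exact_mod_cast hn
  set δ : ℝ := η / n with hδdef
  have hδpos : 0 < δ := by positivity
  have hnδ : (n : ℝ) * δ = η := by rw [hδdef]; field_simp
  have hkδη : ∀ k : ℕ, k ≤ n → (k : ℝ) * δ ≤ η := by
    intro k hk
    calc (k : ℝ) * δ ≤ (n : ℝ) * δ := mul_le_mul_of_nonneg_right (by exact_mod_cast hk) hδpos.le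
    _ = η := hnδ
  have hint : ∀ k < n, IntervalIntegrable (fun x : ℝ => F (x : ℂ)) volume
      ((fun k : ℕ => (k : ℝ) * δ) k) ((fun k : ℕ => (k : ℝ) * δ) (k + 1)) := by
    intro k hk
    refine II hη hc (by fun_prop) ?_
    intro x hx
    simp only at hx
    rw [uIcc_of_le (by push_cast; nlinarith [hδpos, Nat.cast_nonneg (α := ℝ) k])] at hx
    have h1 : ((k : ℝ) + 1) * δ ≤ η := by
      have := hkδη (k + 1) hk; push_cast at this; linarith
    have hx1 : 0 ≤ x := le_trans (by positivity) hx.1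
    have hx2 : x ≤ η := by
      refine le_trans hx.2 ?_
      push_cast
      linarith
    refine mem_Kg (by simpa using hx1) (by simp; linarith) (by simp; linarith) (by simp)
  have := intervalIntegral.sum_integral_adjacent_intervals (μ := volume)
    (f := fun x : ℝ => F (x : ℂ)) (a := fun k : ℕ => (k : ℝ) * δ) (n := n) hint
  simp only [Nat.cast_zero, zero_mul, Nat.cast_add, Nat.cast_one] at this
  rw [hnδ] at this
  rw [← this]

/-- Telescoping of the vertical edges of the staircase. -/
lemma vert_telescope (hη : 0 < η) (hc : ContinuousOn F (closure (Rg η))) {n : ℕ} (hn : 0 < n) :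
    (∑ k ∈ Finset.range n,
        I * ∫ y in (-((k : ℝ) * (η / n)))..(0:ℝ), F ((((k : ℝ) + 1) * (η / n) : ℝ) + y * I))
      - (∑ k ∈ Finset.range n,
        I * ∫ y in (-((k : ℝ) * (η / n)))..(0:ℝ), F (((k : ℝ) * (η / n) : ℝ) + y * I))
    = I * (∫ y in (-η)..(0:ℝ), F ((η : ℝ) + y * I))
      - I * (∑ k ∈ Finset.range n, ∫ x in ((k : ℝ) * (η / n))..(((k : ℝ) + 1) * (η / n)),
          F ((((k : ℝ) + 1) * (η / n) : ℝ) - (x : ℂ) * I)) := by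
  have hnpos : (0:ℝ) < n := by exact_mod_cast hn
  set δ : ℝ := η / n with hδdef
  have hδpos : 0 < δ := by positivity
  have hnδ : (n : ℝ) * δ = η := by rw [hδdef]; field_simp
  have hkδη : ∀ k : ℕ, k ≤ n → (k : ℝ) * δ ≤ η := by
    intro k hk
    calc (k : ℝ) * δ ≤ (n : ℝ) * δ := mul_le_mul_of_nonneg_right (by exact_mod_cast hk) hδpos.le
    _ = η := hnδ
  set vint : ℝ → ℂ := fun a => I * ∫ y in (-a)..(0:ℝ), F ((a : ℂ) + y * I) with hvint
  have hsplit : ∀ k ∈ Finset.range n,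
      I * (∫ y in (-((k : ℝ) * δ))..(0:ℝ), F ((((k : ℝ) + 1) * δ : ℝ) + y * I))
        - I * (∫ y in (-((k : ℝ) * δ))..(0:ℝ), F (((k : ℝ) * δ : ℝ) + y * I))
      = (vint (((k : ℕ) + 1 : ℕ) * δ) - vint ((k : ℝ) * δ))
        - I * ∫ x in ((k : ℝ) * δ)..(((k : ℝ) + 1) * δ),
            F ((((k : ℝ) + 1) * δ : ℝ) - (x : ℂ) * I) := by
    intro k hk
    rw [Finset.mem_range] at hk
    have hknn : (0:ℝ) ≤ (k : ℝ) * δ := by positivity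
    have hk1η : ((k : ℝ) + 1) * δ ≤ η := by
      have := hkδη (k + 1) hk; push_cast at this; linarith
    have hk1nn : (0:ℝ) ≤ ((k : ℝ) + 1) * δ := by positivity
    have hle : (k : ℝ) * δ ≤ ((k : ℝ) + 1) * δ := by nlinarith
    have hvmem : ∀ y ∈ uIcc (-(((k : ℝ) + 1) * δ)) (0:ℝ),
        ((((k : ℝ) + 1) * δ : ℝ) : ℂ) + y * I ∈ Kg η := by
      intro y hy
      rw [uIcc_of_le (by linarith)] at hy
      refine mem_Kg (by simpa using hk1nn) (by simp; linarith [hy.1]) (by simp; linarith [hy.1])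
        (by simpa using hy.2)
    have hii1 : IntervalIntegrable
        (fun y : ℝ => F ((((k : ℝ) + 1) * δ : ℝ) + y * I)) volume
        (-(((k : ℝ) + 1) * δ)) (-((k : ℝ) * δ)) := by
      refine II hη hc (by fun_prop) ?_
      intro y hy
      refine hvmem y ?_
      rw [uIcc_of_le (by linarith)] at hy
      rw [uIcc_of_le (by linarith)]
      exact ⟨hy.1, by linarith [hy.2]⟩
    have hii2 : IntervalIntegrable
        (fun y : ℝ => F ((((k : ℝ) + 1) * δ : ℝ) + y * I)) volume
        (-((k : ℝ) * δ)) 0 := by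
      refine II hη hc (by fun_prop) ?_
      intro y hy
      refine hvmem y ?_
      rw [uIcc_of_le (by linarith)] at hy
      rw [uIcc_of_le (by linarith)]
      exact ⟨by linarith [hy.1], hy.2⟩
    have hadj := intervalIntegral.integral_add_adjacent_intervals hii1 hii2
    have hcv : (∫ y in (-(((k : ℝ) + 1) * δ))..(-((k : ℝ) * δ)),
          F ((((k : ℝ) + 1) * δ : ℝ) + y * I))
        = ∫ x in ((k : ℝ) * δ)..(((k : ℝ) + 1) * δ),
            F ((((k : ℝ) + 1) * δ : ℝ) - (x : ℂ) * I) := by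
      have h := intervalIntegral.integral_comp_neg
        (f := fun y : ℝ => F ((((k : ℝ) + 1) * δ : ℝ) + y * I))
        (a := (k : ℝ) * δ) (b := ((k : ℝ) + 1) * δ)
      rw [← h]
      refine intervalIntegral.integral_congr (fun x _ => ?_)
      congr 1
      push_cast; ring
    have hv1 : vint ((((k : ℕ) + 1 : ℕ) : ℝ) * δ)
        = I * ∫ y in (-(((k : ℝ) + 1) * δ))..(0:ℝ), F ((((k : ℝ) + 1) * δ : ℝ) + y * I) := by
      rw [hvint]
      push_cast
      rfl
    have hv2 : vint ((k : ℝ) * δ)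
        = I * ∫ y in (-((k : ℝ) * δ))..(0:ℝ), F (((k : ℝ) * δ : ℝ) + y * I) := rfl
    rw [hv1, hv2, ← hadj, hcv]
    ring
  rw [← Finset.sum_sub_distrib, Finset.sum_congr rfl hsplit, Finset.sum_sub_distrib,
    Finset.sum_range_sub (fun k : ℕ => vint ((k : ℝ) * δ)), ← Finset.mul_sum]
  have hv0 : vint (((0:ℕ) : ℝ) * δ) = 0 := by
    simp [hvint]
  have hvn : vint (((n:ℕ) : ℝ) * δ) = I * ∫ y in (-η)..(0:ℝ), F ((η : ℝ) + y * I) := by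
    rw [hvint]
    simp only
    rw [hnδ]
  rw [hv0, hvn]
  ring


/-- The corner identity. -/
lemma corner (hη : 0 < η) (hc : ContinuousOn F (closure (Rg η)))
    (hd : DifferentiableOn ℂ F (Rg η)) :
    ∫ x in (0:ℝ)..η, F x
      = (1 - I) * (∫ α in (0:ℝ)..η, F ((α : ℂ) - α * I))
        + I * ∫ y in (-η)..(0:ℝ), F ((η : ℝ) + y * I) := by
  have key : ∀ n : ℕ, 0 < n →
      ∫ x in (0:ℝ)..η, F x
        = (∑ k ∈ Finset.range n, ∫ x in ((k : ℝ) * (η / n))..(((k : ℝ) + 1) * (η / n)),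
              F ((x : ℂ) - ((k : ℝ) * (η / n) : ℝ) * I))
          - I * (∑ k ∈ Finset.range n, ∫ x in ((k : ℝ) * (η / n))..(((k : ℝ) + 1) * (η / n)),
              F ((((k : ℝ) + 1) * (η / n) : ℝ) - (x : ℂ) * I))
          + I * ∫ y in (-η)..(0:ℝ), F ((η : ℝ) + y * I) := by
    intro n hn
    have hnpos : (0:ℝ) < n := by exact_mod_cast hn
    have hδpos : 0 < η / n := by positivity
    have hkδη : ∀ k : ℕ, k ≤ n → (k : ℝ) * (η / n) ≤ η := by
      intro k hk
      calc (k : ℝ) * (η / n) ≤ (n : ℝ) * (η / n) :=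
            mul_le_mul_of_nonneg_right (by exact_mod_cast hk) hδpos.le
      _ = η := by field_simp
    have hmono : ∀ k : ℕ, (k : ℝ) * (η / n) ≤ ((k : ℝ) + 1) * (η / n) := by
      intro k; nlinarith [hδpos, Nat.cast_nonneg (α := ℝ) k]
    have hknn : ∀ k : ℕ, (0:ℝ) ≤ (k : ℝ) * (η / n) := by
      intro k; positivity
    have hrect : ∀ k ∈ Finset.range n,
        (∫ x in ((k : ℝ) * (η / n))..(((k : ℝ) + 1) * (η / n)),
            F ((x : ℂ) - ((k : ℝ) * (η / n) : ℝ) * I))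
          - (∫ x in ((k : ℝ) * (η / n))..(((k : ℝ) + 1) * (η / n)), F (x : ℂ))
          + I * (∫ y in (-((k : ℝ) * (η / n)))..(0:ℝ),
              F ((((k : ℝ) + 1) * (η / n) : ℝ) + y * I))
          - I * (∫ y in (-((k : ℝ) * (η / n)))..(0:ℝ),
              F (((k : ℝ) * (η / n) : ℝ) + y * I)) = 0 := by
      intro k hk
      rw [Finset.mem_range] at hk
      exact rect hη hc hd (hknn k) (hmono k) (hknn k) le_rfl (hkδη k hk.le)
    have hsum0 := Finset.sum_eq_zero hrect
    rw [Finset.sum_sub_distrib, Finset.sum_add_distrib, Finset.sum_sub_distrib] at hsum0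
    have h1 := hmid_lemma hη hc hn
    have h2 := vert_telescope hη hc hn
    linear_combination -hsum0 - h1 + h2
  -- the two staircase limits
  have hmemA : ∀ n : ℕ, 0 < n → ∀ k < n,
      ∀ x ∈ uIcc ((k : ℝ) * (η / n)) (((k : ℝ) + 1) * (η / n)),
      (fun n k x => (x : ℂ) - ((k : ℝ) * (η / (n:ℕ)) : ℝ) * I) n k x ∈ K0 η ∧
        ‖(fun n k x => (x : ℂ) - ((k : ℝ) * (η / (n:ℕ)) : ℝ) * I) n k x
          - ((x : ℂ) - x * I)‖ ≤ η / n := by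
    intro n hn k hk x hx
    simp only []
    have hnpos : (0:ℝ) < n := by exact_mod_cast hn
    have hδpos : 0 < η / n := by positivity
    have hknn : (0:ℝ) ≤ (k : ℝ) * (η / n) := by positivity
    have hmono : (k : ℝ) * (η / n) ≤ ((k : ℝ) + 1) * (η / n) := by nlinarith [Nat.cast_nonneg (α := ℝ) k]
    rw [uIcc_of_le hmono] at hx
    have hk1η : ((k : ℝ) + 1) * (η / n) ≤ η := by
      have : ((k + 1 : ℕ) : ℝ) * (η / n) ≤ (n : ℝ) * (η / n) :=
        mul_le_mul_of_nonneg_right (by exact_mod_cast hk) hδpos.le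
      push_cast at this
      calc ((k : ℝ) + 1) * (η / n) ≤ (n : ℝ) * (η / n) := this
      _ = η := by field_simp
    have hx0 : 0 ≤ x := le_trans hknn hx.1
    have hxη : x ≤ η := le_trans hx.2 hk1η
    have hkδη : (k : ℝ) * (η / n) ≤ η := le_trans hmono hk1η
    constructor
    · refine ⟨mem_Kg (by simpa using hx0) (by simp; linarith [hx.1])
        (by simp; linarith) (by simp; linarith [hknn]), by simpa using hxη⟩
    · have heq : (x : ℂ) - ((k : ℝ) * (η / n) : ℝ) * I - ((x : ℂ) - x * I)
          = ((x - (k : ℝ) * (η / n) : ℝ) : ℂ) * I := by push_cast; ring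
      rw [heq, norm_mul, Complex.norm_I, mul_one, Complex.norm_real, Real.norm_eq_abs]
      have hexp : ((k:ℝ) + 1) * (η / ↑n) = (k:ℝ) * (η / ↑n) + η / ↑n := by ring
      exact abs_le.2 ⟨by linarith [hx.1, hδpos], by linarith [hx.2]⟩
  have hA := staircase_tendsto hη hc
    (fun n k x => (x : ℂ) - ((k : ℝ) * (η / (n:ℕ)) : ℝ) * I) (fun n k => by fun_prop) hmemA
  have hmemW : ∀ n : ℕ, 0 < n → ∀ k < n,
      ∀ x ∈ uIcc ((k : ℝ) * (η / n)) (((k : ℝ) + 1) * (η / n)),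
      (fun n k x => ((((k : ℝ) + 1) * (η / (n:ℕ)) : ℝ) : ℂ) - (x : ℂ) * I) n k x ∈ K0 η ∧
        ‖(fun n k x => ((((k : ℝ) + 1) * (η / (n:ℕ)) : ℝ) : ℂ) - (x : ℂ) * I) n k x
          - ((x : ℂ) - x * I)‖ ≤ η / n := by
    intro n hn k hk x hx
    simp only []
    have hnpos : (0:ℝ) < n := by exact_mod_cast hn
    have hδpos : 0 < η / n := by positivity
    have hknn : (0:ℝ) ≤ (k : ℝ) * (η / n) := by positivity
    have hk1nn : (0:ℝ) ≤ ((k : ℝ) + 1) * (η / n) := by positivity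
    have hmono : (k : ℝ) * (η / n) ≤ ((k : ℝ) + 1) * (η / n) := by nlinarith [Nat.cast_nonneg (α := ℝ) k]
    rw [uIcc_of_le hmono] at hx
    have hk1η : ((k : ℝ) + 1) * (η / n) ≤ η := by
      have : ((k + 1 : ℕ) : ℝ) * (η / n) ≤ (n : ℝ) * (η / n) :=
        mul_le_mul_of_nonneg_right (by exact_mod_cast hk) hδpos.le
      push_cast at this
      calc ((k : ℝ) + 1) * (η / n) ≤ (n : ℝ) * (η / n) := this
      _ = η := by field_simp
    have hx0 : 0 ≤ x := le_trans hknn hx.1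
    have hxη : x ≤ η := le_trans hx.2 hk1η
    constructor
    · refine ⟨mem_Kg (by simpa using hk1nn) (by simp; linarith [hx.2]) (by simp; linarith)
        (by simp; linarith [hx0]), by simpa using hk1η⟩
    · have heq : ((((k : ℝ) + 1) * (η / n) : ℝ) : ℂ) - (x : ℂ) * I - ((x : ℂ) - x * I)
          = ((((k : ℝ) + 1) * (η / n) - x : ℝ) : ℂ) := by push_cast; ring
      rw [heq, Complex.norm_real, Real.norm_eq_abs]
      have hexp : ((k:ℝ) + 1) * (η / ↑n) = (k:ℝ) * (η / ↑n) + η / ↑n := by ring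
      exact abs_le.2 ⟨by linarith [hx.2, hδpos], by linarith [hx.1]⟩
  have hW := staircase_tendsto hη hc
    (fun n k x => ((((k : ℝ) + 1) * (η / (n:ℕ)) : ℝ) : ℂ) - (x : ℂ) * I)
    (fun n k => by fun_prop) hmemW
  have hRHS := (hA.sub (hW.const_mul I)).add
    (tendsto_const_nhds (x := I * ∫ y in (-η)..(0:ℝ), F ((η : ℝ) + y * I)) (f := atTop (α := ℕ)))
  have heq : ∀ᶠ n : ℕ in atTop,
      (∑ k ∈ Finset.range n, ∫ x in ((k : ℝ) * (η / n))..(((k : ℝ) + 1) * (η / n)),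
          F ((x : ℂ) - ((k : ℝ) * (η / n) : ℝ) * I))
        - I * (∑ k ∈ Finset.range n, ∫ x in ((k : ℝ) * (η / n))..(((k : ℝ) + 1) * (η / n)),
            F ((((k : ℝ) + 1) * (η / n) : ℝ) - (x : ℂ) * I))
        + I * (∫ y in (-η)..(0:ℝ), F ((η : ℝ) + y * I))
      = ∫ x in (0:ℝ)..η, F x := by
    filter_upwards [eventually_gt_atTop 0] with n hn
    exact (key n hn).symm
  have hfin := tendsto_nhds_unique (hRHS.congr' heq) tendsto_const_nhds
  linear_combination -hfin

/-- The identity for the right half line. -/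
lemma right_half (hη : 0 < η) (hc : ContinuousOn F (closure (Rg η)))
    (hd : DifferentiableOn ℂ F (Rg η)) (hD : 0 ≤ D)
    (hb : ∀ z ∈ Kg η, ‖F z‖ ≤ D * ((1 + |z.re|) ^ 2)⁻¹) :
    ∫ x in Ioi (0:ℝ), F x
      = (1 - I) * (∫ α in (0:ℝ)..η, F ((α : ℂ) - α * I))
        + ∫ ξ in Ioi η, F ((ξ : ℂ) - η * I) := by
  have hIoi : IntegrableOn (fun x : ℝ => F x) (Ioi η) := by
    have := integrableOn_horiz hη hc hD hb (a := η) (c := 0) hη.le (by linarith) (by linarith)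
      le_rfl
    simpa using this
  have hIoc : IntegrableOn (fun x : ℝ => F x) (Ioc 0 η) := by
    rw [← intervalIntegrable_iff_integrableOn_Ioc_of_le hη.le]
    refine II hη hc (by fun_prop) ?_
    intro x hx
    rw [uIcc_of_le hη.le] at hx
    exact mem_Kg (by simpa using hx.1) (by simp; linarith [hx.1]) (by simp; linarith [hx.1])
      (by simp)
  have hsplit : ∫ x in Ioi (0:ℝ), F x = (∫ x in (0:ℝ)..η, F x) + ∫ x in Ioi η, F x := by
    rw [intervalIntegral.integral_of_le hη.le,
      ← setIntegral_union (Ioc_disjoint_Ioi le_rfl) measurableSet_Ioi hIoc hIoi,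
      Ioc_union_Ioi_eq_Ioi hη.le]
  rw [hsplit, corner hη hc hd, far hη hc hd hD hb]
  ring

lemma Rg_subset_Gamma (η : ℝ) : Rg η ⊆ GammaRegion η := fun _ hz => Or.inr hz

lemma neg_Rg_subset_Gamma (η : ℝ) : (fun z : ℂ => -z) '' Rg η ⊆ GammaRegion η := by
  rintro w ⟨u, hu, rfl⟩
  obtain ⟨h1, h2, h3⟩ := hu
  left
  refine ⟨by simpa using h1, by simpa using h3, ?_⟩
  simp only [Complex.neg_im, Complex.neg_re, neg_neg]
  linarith [h2]

lemma neg_mapsTo_closure {η : ℝ} :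
    MapsTo (fun z : ℂ => -z) (closure (Rg η)) (closure (GammaRegion η)) := by
  intro z hz
  have h1 : (fun z : ℂ => -z) '' closure (Rg η) ⊆ closure ((fun z : ℂ => -z) '' Rg η) :=
    image_closure_subset_closure_image continuous_neg
  have h2 : closure ((fun z : ℂ => -z) '' Rg η) ⊆ closure (GammaRegion η) :=
    closure_mono (neg_Rg_subset_Gamma η)
  exact h2 (h1 (mem_image_of_mem _ hz))

lemma im_le_closure_Gamma {η : ℝ} (hη : 0 < η) :
    ∀ z ∈ closure (GammaRegion η), |z.im| ≤ η := by
  have hsub : GammaRegion η ⊆ {z : ℂ | |z.im| ≤ η} := by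
    rintro z (⟨h1, h2, h3⟩ | ⟨h1, h2, h3⟩)
    · have hm := min_le_right (-z.re) η
      simp only [mem_setOf_eq, abs_le]
      refine ⟨?_, ?_⟩
      · linarith
      · linarith
    · have hm := min_le_right z.re η
      simp only [mem_setOf_eq, abs_le]
      refine ⟨?_, ?_⟩
      · linarith
      · linarith
  have hclosed : IsClosed {z : ℂ | |z.im| ≤ η} :=
    isClosed_le (continuous_abs.comp Complex.continuous_im) continuous_const
  intro z hz
  exact closure_minimal hsub hclosed hz

end Stmt3Aux

open Stmt3Aux

theorem stmt3 (η : ℝ) (hη : 0 < η) (g : ℂ → ℂ) (C : ℝ)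
    (hcont : ContinuousOn g (closure (GammaRegion η)))
    (hanal : DifferentiableOn ℂ g (GammaRegion η))
    (hbound : ∀ z ∈ closure (GammaRegion η),
      ‖g z‖ ≤ C * (1 + |z.re|) ^ (-2 : ℤ)) :
    ∀ t : ℝ,
      (∫ x : ℝ, Complex.exp (I * (t : ℂ) * (x : ℂ)) * g x)
        = contourIntegral η (fun z => Complex.exp (I * (t : ℂ) * z) * g z) := by
  intro t
  set F : ℂ → ℂ := fun z => Complex.exp (I * (t : ℂ) * z) * g z with hF
  -- C is nonnegative
  have hz₀ : (⟨η/2, -η/4⟩ : ℂ) ∈ GammaRegion η := by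
    right
    refine ⟨by simpa using by linarith, ?_, by simpa using by linarith⟩
    show -min ((⟨η/2, -η/4⟩ : ℂ)).re η < ((⟨η/2, -η/4⟩ : ℂ)).im
    have : min (η/2) η = η/2 := min_eq_left (by linarith)
    show -min (η/2) η < -η/4
    rw [this]; linarith
  have hC : 0 ≤ C := by
    have h1 := hbound _ (subset_closure hz₀)
    have h2 : (0:ℝ) < (1 + |(⟨η/2, -η/4⟩ : ℂ).re|) ^ (-2 : ℤ) := by
      refine zpow_pos ?_ _
      have : (0:ℝ) ≤ |(⟨η/2, -η/4⟩ : ℂ).re| := abs_nonneg _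
      linarith
    nlinarith [norm_nonneg (g (⟨η/2, -η/4⟩ : ℂ))]
  set D : ℝ := C * Real.exp (|t| * η) with hD
  have hD0 : 0 ≤ D := by positivity
  -- bound for F on the closure of the region
  have hFb : ∀ z ∈ closure (GammaRegion η), ‖F z‖ ≤ D * ((1 + |z.re|) ^ 2)⁻¹ := by
    intro z hz
    have him := im_le_closure_Gamma hη z hz
    have hexp : ‖Complex.exp (I * (t : ℂ) * z)‖ ≤ Real.exp (|t| * η) := by
      rw [Complex.norm_exp]
      refine Real.exp_le_exp.2 ?_
      have hre : (I * (t : ℂ) * z).re = -(t * z.im) := by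
        simp [Complex.mul_re, Complex.mul_im]
      rw [hre]
      calc -(t * z.im) ≤ |t * z.im| := neg_le_abs _
      _ = |t| * |z.im| := abs_mul _ _
      _ ≤ |t| * η := mul_le_mul_of_nonneg_left him (abs_nonneg t)
    have hzpow : (1 + |z.re|) ^ (-2 : ℤ) = ((1 + |z.re|) ^ 2)⁻¹ := by
      rw [zpow_neg, show ((2:ℤ)) = ((2:ℕ) : ℤ) from rfl, zpow_natCast]
    have hg := hbound z hz
    rw [hzpow] at hg
    rw [hF]
    simp only [norm_mul]
    calc ‖Complex.exp (I * (t : ℂ) * z)‖ * ‖g z‖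
        ≤ Real.exp (|t| * η) * (C * ((1 + |z.re|) ^ 2)⁻¹) := by
          refine mul_le_mul hexp ?_ (norm_nonneg _) (Real.exp_nonneg _)
          exact hg
    _ = D * ((1 + |z.re|) ^ 2)⁻¹ := by rw [hD]; ring
  -- continuity and differentiability of F
  have hFc : ContinuousOn F (closure (GammaRegion η)) := by
    refine ContinuousOn.mul ?_ hcont
    exact (Complex.continuous_exp.comp (by fun_prop)).continuousOn
  have hFd : DifferentiableOn ℂ F (GammaRegion η) := by
    refine DifferentiableOn.mul ?_ hanal
    exact (Complex.differentiable_exp.comp (by fun_prop)).differentiableOn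
  -- restrictions to the right region
  have hclos : closure (Rg η) ⊆ closure (GammaRegion η) := closure_mono (Rg_subset_Gamma η)
  have hKsubG : Kg η ⊆ closure (GammaRegion η) := fun z hz =>
    hclos (Kg_subset_closure hη hz)
  have hFcR : ContinuousOn F (closure (Rg η)) := hFc.mono hclos
  have hFdR : DifferentiableOn ℂ F (Rg η) := hFd.mono (Rg_subset_Gamma η)
  have hFbK : ∀ z ∈ Kg η, ‖F z‖ ≤ D * ((1 + |z.re|) ^ 2)⁻¹ := fun z hz => hFb z (hKsubG hz)
  -- the reflected function
  set G : ℂ → ℂ := fun z => F (-z) with hG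
  have hGc : ContinuousOn G (closure (Rg η)) :=
    ContinuousOn.comp hFc continuous_neg.continuousOn neg_mapsTo_closure
  have hGd : DifferentiableOn ℂ G (Rg η) := by
    refine DifferentiableOn.comp hFd (differentiable_id.neg).differentiableOn ?_
    intro z hz
    exact neg_Rg_subset_Gamma η (mem_image_of_mem _ hz)
  have hGbK : ∀ z ∈ Kg η, ‖G z‖ ≤ D * ((1 + |z.re|) ^ 2)⁻¹ := by
    intro z hz
    have := hFb (-z) (neg_mapsTo_closure (Kg_subset_closure hη hz))
    simpa using this
  -- the two half-line identities
  have hR := right_half hη hFcR hFdR hD0 hFbK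
  have hL := right_half hη hGc hGd hD0 hGbK
  -- transform the left identity
  have hL1 : (∫ x in Ioi (0:ℝ), G x) = ∫ x in Iic (0:ℝ), F x := by
    have h1 : (∫ x in Ioi (0:ℝ), G x) = ∫ x in Ioi (0:ℝ), (fun y : ℝ => F y) (-x) := by
      refine setIntegral_congr_fun measurableSet_Ioi (fun x _ => ?_)
      show F (-(x:ℂ)) = F ((-x : ℝ) : ℂ)
      congr 1
      push_cast
      ring
    have h2 : (∫ x in Ioi (0:ℝ), (fun y : ℝ => F y) (-x))
        = ∫ x in Iic (-(0:ℝ)), (fun y : ℝ => F y) x := integral_comp_neg_Ioi 0 (fun y : ℝ => F y)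
    rw [h1, h2]
    norm_num
  have hL2 : (∫ α in (0:ℝ)..η, G ((α : ℂ) - α * I)) = ∫ α in (-η)..(0:ℝ), F ((α : ℂ) - α * I) := by
    have h1 : (∫ α in (0:ℝ)..η, G ((α : ℂ) - α * I))
        = ∫ α in (0:ℝ)..η, (fun β : ℝ => F ((β : ℂ) - β * I)) (-α) := by
      refine intervalIntegral.integral_congr (fun α _ => ?_)
      show F (-((α:ℂ) - α * I)) = F (((-α : ℝ) : ℂ) - ((-α : ℝ) : ℂ) * I)
      congr 1
      push_cast
      ring
    have h2 := intervalIntegral.integral_comp_neg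
      (f := fun β : ℝ => F ((β : ℂ) - β * I)) (a := (0:ℝ)) (b := η)
    rw [h1, h2, neg_zero]
  have hL3 : (∫ ξ in Ioi η, G ((ξ : ℂ) - η * I)) = ∫ ξ in Ioi η, F (-(ξ:ℂ) + η * I) := by
    refine setIntegral_congr_fun measurableSet_Ioi (fun ξ _ => ?_)
    show F (-((ξ:ℂ) - η * I)) = F (-(ξ:ℂ) + η * I)
    congr 1
    ring
  rw [hL1, hL2, hL3] at hL
  -- integrability over the real line
  have hreal : ∀ x : ℝ, (x : ℂ) ∈ closure (GammaRegion η) := by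
    intro x
    rcases le_or_gt 0 x with hx | hx
    · exact hKsubG (mem_Kg (by simpa using hx) (by simp; linarith) (by simp; linarith) (by simp))
    · have hmem : ((-x : ℝ) : ℂ) ∈ Kg η :=
        mem_Kg (by simp; linarith) (by simp; linarith) (by simp; linarith) (by simp)
      have := neg_mapsTo_closure (Kg_subset_closure hη hmem)
      simpa using this
  have hFcont : Continuous (fun x : ℝ => F x) := by
    rw [← continuousOn_univ]
    exact ContinuousOn.comp hFc Complex.continuous_ofReal.continuousOn
      (fun x _ => hreal x)
  have hInt : Integrable (fun x : ℝ => F x) := by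
    refine Integrable.mono' ((integrable_inv_one_add_sq).const_mul D)
      hFcont.aestronglyMeasurable ?_
    filter_upwards with x
    have h1 := hFb (x : ℂ) (hreal x)
    have h2 : ((x : ℂ)).re = x := by simp
    rw [h2] at h1
    refine h1.trans ?_
    have hle : (1:ℝ) + x ^ 2 ≤ (1 + |x|) ^ 2 := by nlinarith [abs_nonneg x, _root_.sq_abs x]
    have hpos : (0:ℝ) < 1 + x ^ 2 := by positivity
    exact mul_le_mul_of_nonneg_left (inv_anti₀ hpos hle) hD0
  have htotal : (∫ x : ℝ, F x)
      = (∫ x in Iic (0:ℝ), F x) + ∫ x in Ioi (0:ℝ), F x :=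
    (intervalIntegral.integral_Iic_add_Ioi hInt.integrableOn hInt.integrableOn).symm
  -- splitting the diagonal
  have hdiag : (∫ α in (-η)..η, F ((α : ℂ) - α * I))
      = (∫ α in (-η)..(0:ℝ), F ((α : ℂ) - α * I)) + ∫ α in (0:ℝ)..η, F ((α : ℂ) - α * I) := by
    refine (intervalIntegral.integral_add_adjacent_intervals ?_ ?_).symm
    · refine (ContinuousOn.comp hFc (by fun_prop) ?_).intervalIntegrable
      intro α hα
      simp only []
      rw [uIcc_of_le (by linarith : -η ≤ (0:ℝ))] at hα
      have hmem : (((-α : ℝ)) : ℂ) - ((-α : ℝ) : ℂ) * I ∈ Kg η := by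
        refine mem_Kg (by simp; linarith [hα.2]) (by simp) (by simp; linarith [hα.1])
          (by simp; linarith [hα.2])
      have hmem2 := neg_mapsTo_closure (Kg_subset_closure hη hmem)
      simp only [] at hmem2
      have heq : -((((-α : ℝ)) : ℂ) - ((-α : ℝ) : ℂ) * I) = (α : ℂ) - α * I := by
        push_cast; ring
      rwa [heq] at hmem2
    · refine (ContinuousOn.comp hFc (by fun_prop) ?_).intervalIntegrable
      intro α hα
      simp only []
      rw [uIcc_of_le hη.le] at hα
      exact hKsubG (mem_Kg (by simp; linarith [hα.1]) (by simp)
        (by simp; linarith [hα.1, hα.2]) (by simp; linarith [hα.1]))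
  -- put everything together
  show (∫ x : ℝ, F x) = contourIntegral η F
  rw [contourIntegral, htotal, hdiag]
  linear_combination hR + hL
end

section
/- Let H be a complex Hilbert space, p ≥ 1, U an open subset of ℂᵖ, and z₀ ∈ U. Let T : U → B(H) be an analytic map such that T(z) is a compact operator for every z ∈ U. Then there exist an open neighborhood U₀ ⊆ U of z₀ and an analytic function h : U₀ → ℂ such that for every z ∈ U₀, the operator I + T(z) is invertible in B(H) if and only if h(z) ≠ 0. -/
open Metric Set

noncomputable section AuxFredholm

variable {H : Type*} [NormedAddCommGroup H] [InnerProductSpace ℂ H]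

/-- Auxiliary finite-dimensional "determinant data" map: for an operator `K` (intended to have
range inside `V`), the endomorphism `id + P ∘ K ∘ ι` of `V`. -/
noncomputable def sOfAux (V : Submodule ℂ H) [CompleteSpace V] (K : H →L[ℂ] H) :
    V →ₗ[ℂ] V :=
  LinearMap.id + ((V.orthogonalProjectionOnto).comp (K.comp V.subtypeL)).toLinearMap

@[simp] lemma sOfAux_apply (V : Submodule ℂ H) [CompleteSpace V] (K : H →L[ℂ] H) (v : V) :
    sOfAux V K v = v + V.orthogonalProjectionOnto (K (v : H)) := rfl

/-- For an operator `K` with range inside a finite dimensional subspace `V`, invertibility of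
`1 + K` is equivalent to non-vanishing of the determinant of `sOfAux V K`. -/
theorem isUnit_one_add_iff_det {V : Submodule ℂ H} [FiniteDimensional ℂ V]
    (K : H →L[ℂ] H) (hK : ∀ x, K x ∈ V) :
    IsUnit (1 + K) ↔ LinearMap.det (sOfAux V K) ≠ 0 := by
  classical
  set P := V.orthogonalProjectionOnto with hPdef
  set S := sOfAux V K with hSdef
  have hPK : ∀ x : H, ((P (K x)) : H) = K x :=
    fun x => (Submodule.starProjection_eq_self_iff (K := V)).mpr (hK x)
  have hScoe : ∀ v : V, ((S v : V) : H) = (v : H) + K (v : H) := by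
    intro v
    rw [hSdef, sOfAux_apply, Submodule.coe_add, hPK]
  have hdet : IsUnit S ↔ LinearMap.det S ≠ 0 := by
    constructor
    · intro h
      exact isUnit_iff_ne_zero.mp (LinearMap.isUnit_det S h)
    · intro h
      let b := Module.finBasis ℂ V
      have hM : IsUnit (LinearMap.toMatrix b b S) := by
        rw [Matrix.isUnit_iff_isUnit_det, LinearMap.det_toMatrix]
        exact isUnit_iff_ne_zero.mpr h
      obtain ⟨Mu, hMu⟩ := hM
      have hS : S = Matrix.toLin b b (↑Mu) := by
        rw [hMu, Matrix.toLin_toMatrix]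
      refine ⟨⟨S, Matrix.toLin b b (↑Mu⁻¹), ?_, ?_⟩, rfl⟩
      · rw [hS, Module.End.mul_eq_comp, ← Matrix.toLin_mul, Mu.mul_inv, Matrix.toLin_one,
          Module.End.one_eq_id]
      · rw [hS, Module.End.mul_eq_comp, ← Matrix.toLin_mul, Mu.inv_mul, Matrix.toLin_one,
          Module.End.one_eq_id]
  rw [← hdet]
  constructor
  · intro h
    obtain ⟨u, hu⟩ := h
    have hinj : Function.Injective ⇑(1 + K) := by
      intro a b hab
      have h2 := congrArg (⇑(↑u⁻¹ : H →L[ℂ] H)) hab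
      rwa [← hu, ← ContinuousLinearMap.mul_apply, ← ContinuousLinearMap.mul_apply, u.inv_mul,
        ContinuousLinearMap.one_apply, ContinuousLinearMap.one_apply] at h2
    have hSinj : Function.Injective S := by
      intro v w hvw
      have h1 : (1 + K) ((v : V) : H) = (1 + K) ((w : V) : H) := by
        simp only [ContinuousLinearMap.add_apply, ContinuousLinearMap.one_apply]
        rw [← hScoe v, ← hScoe w, hvw]
      exact Subtype.ext (hinj h1)
    exact (LinearMap.isUnit_iff_ker_eq_bot S).mpr (LinearMap.ker_eq_bot.mpr hSinj)
  · intro h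
    obtain ⟨u, hu⟩ := h
    set S' : V →ₗ[ℂ] V := (↑u⁻¹ : V →ₗ[ℂ] V) with hS'def
    have hQS : ∀ v : V, S' (S v) = v := by
      intro v
      have h2 : (↑u⁻¹ * ↑u : Module.End ℂ V) v = (1 : Module.End ℂ V) v := by rw [u.inv_mul]
      simpa [hS'def, hu, Module.End.mul_apply, Module.End.one_apply] using h2
    have hSQ : ∀ v : V, S (S' v) = v := by
      intro v
      have h2 : (↑u * ↑u⁻¹ : Module.End ℂ V) v = (1 : Module.End ℂ V) v := by rw [u.mul_inv]
      simpa [hS'def, hu, Module.End.mul_apply, Module.End.one_apply] using h2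
    have hw : ∀ y : V, K (y : H) = ((S y : V) : H) - (y : H) := by
      intro y
      rw [hScoe y]
      abel
    let Q : V →L[ℂ] V := LinearMap.toContinuousLinearMap S'
    have hQapp : ∀ v : V, Q v = S' v := fun v => rfl
    let G : H →L[ℂ] H := 1 - V.subtypeL.comp (Q.comp (P.comp K))
    refine ⟨⟨1 + K, G, ?_, ?_⟩, rfl⟩
    · -- (1 + K) * G = 1
      ext x
      simp only [ContinuousLinearMap.mul_apply, ContinuousLinearMap.add_apply,
        ContinuousLinearMap.one_apply, ContinuousLinearMap.coe_sub',
        Pi.sub_apply, ContinuousLinearMap.coe_comp', Function.comp_apply,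
        Submodule.coe_subtypeL', Submodule.coe_subtype, G]
      rw [hQapp, map_sub K, hw (S' (P (K x))), hSQ (P (K x)), hPK x]
      abel
    · -- G * (1 + K) = 1
      ext x
      simp only [ContinuousLinearMap.mul_apply, ContinuousLinearMap.add_apply,
        ContinuousLinearMap.one_apply, ContinuousLinearMap.coe_sub',
        Pi.sub_apply, ContinuousLinearMap.coe_comp', Function.comp_apply,
        Submodule.coe_subtypeL', Submodule.coe_subtype, G]
      have h5 : P (K (x + K x)) = S (P (K x)) := by
        have hX : K (x + K x) = ((S (P (K x)) : V) : H) := by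
          rw [map_add, hScoe, hPK]
        exact Subtype.ext (by rw [hPK, hX])
      rw [hQapp, h5, hQS, hPK]
      abel

/-- A compact operator on a Hilbert space can be approximated (in norm, to within `1`)
by an operator whose range lies in some finite dimensional subspace. -/
theorem exists_finiteRank_approx [CompleteSpace H]
    (K : H →L[ℂ] H) (hK : IsCompactOperator K) :
    ∃ (V : Submodule ℂ H) (R : H →L[ℂ] H), FiniteDimensional ℂ V ∧
      (∀ x, R x ∈ V) ∧ ‖K - R‖ < 1 := by
  have hc : IsCompact (closure (⇑(K : H →ₗ[ℂ] H) '' Metric.closedBall 0 1)) :=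
    IsCompactOperator.isCompact_closure_image_closedBall (f := (K : H →ₗ[ℂ] H)) hK 1
  have htb : TotallyBounded (⇑K '' Metric.closedBall 0 1) := by
    have := hc.totallyBounded.subset (subset_closure)
    simpa using this
  rw [Metric.totallyBounded_iff] at htb
  obtain ⟨t, htf, hcover⟩ := htb (1 / 2) (by norm_num)
  set V : Submodule ℂ H := Submodule.span ℂ t with hVdef
  haveI : FiniteDimensional ℂ V := FiniteDimensional.span_of_finite ℂ htf
  set P := V.orthogonalProjectionOnto with hPdef
  refine ⟨V, V.subtypeL.comp (P.comp K), inferInstance, fun x => Submodule.coe_mem _, ?_⟩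
  have hb : ∀ x : H, ‖x‖ ≤ 1 → ‖K x - ((P (K x) : V) : H)‖ ≤ 1 / 2 := by
    intro x hx
    have hmem : K x ∈ ⋃ y ∈ t, Metric.ball y (1 / 2) :=
      hcover ⟨x, mem_closedBall_zero_iff.mpr hx, rfl⟩
    rw [Set.mem_iUnion₂] at hmem
    obtain ⟨y, hyt, hy⟩ := hmem
    have h1 : ‖K x - ((P (K x) : V) : H)‖ = ⨅ v : V, ‖K x - v‖ :=
      Submodule.starProjection_minimal (K x)
    have h2 : (⨅ v : V, ‖K x - (v : H)‖) ≤ ‖K x - y‖ := by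
      refine ciInf_le ⟨0, ?_⟩ (⟨y, Submodule.subset_span hyt⟩ : V)
      rintro r ⟨v, rfl⟩
      exact norm_nonneg _
    have h3 : ‖K x - y‖ ≤ 1 / 2 := by
      rw [← dist_eq_norm]
      exact le_of_lt (Metric.mem_ball.mp hy)
    rw [h1]
    exact le_trans h2 h3
  have hop : ‖K - V.subtypeL.comp (P.comp K)‖ ≤ 1 / 2 := by
    refine ContinuousLinearMap.opNorm_le_bound _ (by norm_num) ?_
    intro x
    rcases eq_or_ne x 0 with rfl | hx
    · simp
    · have hxn : (‖x‖ : ℂ) ≠ 0 := by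
        simpa using norm_ne_zero_iff.mpr hx
      set u : H := ((‖x‖ : ℂ))⁻¹ • x with hu
      have hun : ‖u‖ ≤ 1 := by
        rw [hu, norm_smul]
        simp [norm_inv, inv_mul_cancel₀ (norm_ne_zero_iff.mpr hx)]
      have hxu : x = (‖x‖ : ℂ) • u := by
        rw [hu, smul_inv_smul₀ hxn]
      have hKRu : ‖(K - V.subtypeL.comp (P.comp K)) u‖ ≤ 1 / 2 := by
        have := hb u hun
        simpa [ContinuousLinearMap.sub_apply] using this
      have hKx : (K - V.subtypeL.comp (P.comp K)) x
          = (‖x‖ : ℂ) • (K - V.subtypeL.comp (P.comp K)) u := by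
        conv_lhs => rw [hxu]
        rw [map_smul]
      rw [hKx, norm_smul, Complex.norm_real, Real.norm_of_nonneg (norm_nonneg x)]
      calc ‖x‖ * ‖(K - V.subtypeL.comp (P.comp K)) u‖
          ≤ ‖x‖ * (1 / 2) := mul_le_mul_of_nonneg_left hKRu (norm_nonneg x)
        _ = 1 / 2 * ‖x‖ := by ring
  linarith

end AuxFredholm

theorem stmt8 (H : Type*) [NormedAddCommGroup H] [InnerProductSpace ℂ H] [CompleteSpace H]
    (p : ℕ) (hp : 1 ≤ p) (U : Set (Fin p → ℂ)) (hU : IsOpen U)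
    (z₀ : Fin p → ℂ) (hz₀ : z₀ ∈ U)
    (T : (Fin p → ℂ) → (H →L[ℂ] H))
    (hT : AnalyticOnNhd ℂ T U)
    (hTcomp : ∀ z ∈ U, IsCompactOperator (T z)) :
    ∃ U₀ : Set (Fin p → ℂ), IsOpen U₀ ∧ U₀ ⊆ U ∧ z₀ ∈ U₀ ∧
      ∃ h : (Fin p → ℂ) → ℂ, AnalyticOnNhd ℂ h U₀ ∧
        ∀ z ∈ U₀, IsUnit (1 + T z) ↔ h z ≠ 0 := by
  classical
  obtain ⟨V, R₀, hVfd, hR₀mem, hR₀norm⟩ := exists_finiteRank_approx (T z₀) (hTcomp z₀ hz₀)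
  haveI := hVfd
  have hU₀open : IsOpen (U ∩ (fun z => ‖T z - R₀‖) ⁻¹' (Set.Iio 1)) :=
    ((hT.continuousOn.sub continuousOn_const).norm).isOpen_inter_preimage hU isOpen_Iio
  have hz₀mem : z₀ ∈ U ∩ (fun z => ‖T z - R₀‖) ⁻¹' (Set.Iio 1) :=
    ⟨hz₀, show ‖T z₀ - R₀‖ < 1 from hR₀norm⟩
  have hDunit : ∀ z ∈ U ∩ (fun z => ‖T z - R₀‖) ⁻¹' (Set.Iio 1),
      IsUnit (1 + (T z - R₀)) := by
    intro z hz
    have h2 : ‖-(T z - R₀)‖ < 1 := by rw [norm_neg]; exact hz.2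
    have h3 := (Units.oneSub _ h2).isUnit
    rwa [Units.val_oneSub, sub_neg_eq_add] at h3
  refine ⟨U ∩ (fun z => ‖T z - R₀‖) ⁻¹' (Set.Iio 1), hU₀open, Set.inter_subset_left, hz₀mem,
    fun z => LinearMap.det (sOfAux V (R₀ * Ring.inverse (1 + (T z - R₀)))), ?_, ?_⟩
  · -- analyticity
    intro z hz
    have hA1 : AnalyticAt ℂ (fun z => 1 + (T z - R₀)) z :=
      analyticAt_const.add ((hT z hz.1).sub analyticAt_const)
    have hA2 : AnalyticAt ℂ (fun z => Ring.inverse (1 + (T z - R₀))) z := by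
      have hu := hDunit z hz
      have h3 := analyticAt_inverse (𝕜 := ℂ) hu.unit
      rw [hu.unit_spec] at h3
      exact AnalyticAt.comp (g := Ring.inverse) (f := fun w => 1 + (T w - R₀)) h3 hA1
    have hKA : AnalyticAt ℂ (fun z => R₀ * Ring.inverse (1 + (T z - R₀))) z :=
      analyticAt_const.mul hA2
    set b := Module.finBasis ℂ V with hb
    have hfe : (fun z => LinearMap.det (sOfAux V (R₀ * Ring.inverse (1 + (T z - R₀)))))
        = fun z => ∑ σ : Equiv.Perm (Fin (Module.finrank ℂ V)),
            ((Equiv.Perm.sign σ : ℤ) : ℂ) *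
              ∏ i, (LinearMap.toMatrix b b
                (sOfAux V (R₀ * Ring.inverse (1 + (T z - R₀))))) (σ i) i := by
      funext y
      rw [← LinearMap.det_toMatrix b, Matrix.det_apply]
      simp [Units.smul_def, zsmul_eq_mul]
    rw [hfe]
    apply Finset.analyticAt_fun_sum
    intro σ _
    refine analyticAt_const.mul ?_
    apply Finset.analyticAt_fun_prod
    intro i _
    set Φ : (H →L[ℂ] H) →L[ℂ] ℂ :=
      (LinearMap.toContinuousLinearMap (b.coord (σ i))).comp
        ((V.orthogonalProjectionOnto).comp (ContinuousLinearMap.apply ℂ H ((b i : V) : H)))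
      with hΦ
    have hentry : (fun y => (LinearMap.toMatrix b b
          (sOfAux V (R₀ * Ring.inverse (1 + (T y - R₀))))) (σ i) i)
        = fun y => (if i = σ i then (1 : ℂ) else 0)
            + Φ (R₀ * Ring.inverse (1 + (T y - R₀))) := by
      funext y
      rw [LinearMap.toMatrix_apply, sOfAux_apply, map_add]
      simp [hΦ, Module.Basis.repr_self, Finsupp.single_apply, Module.Basis.coord_apply,
        ContinuousLinearMap.apply_apply, LinearMap.coe_toContinuousLinearMap',
        Finsupp.add_apply]
    rw [hentry]
    exact analyticAt_const.add ((Φ.analyticAt _).comp hKA)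
  · -- the characterization of invertibility
    intro z hz
    have hD := hDunit z hz
    have hWunit : IsUnit (Ring.inverse (1 + (T z - R₀))) := by
      rw [← hD.unit_spec, Ring.inverse_unit]
      exact (hD.unit⁻¹).isUnit
    have hfact : (1 + R₀ * Ring.inverse (1 + (T z - R₀))) * (1 + (T z - R₀)) = 1 + T z := by
      rw [add_mul, one_mul, mul_assoc, Ring.inverse_mul_cancel _ hD, mul_one]
      abel
    have hmem : ∀ x, (R₀ * Ring.inverse (1 + (T z - R₀))) x ∈ V := by
      intro x
      simpa [ContinuousLinearMap.mul_apply] using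
        hR₀mem ((Ring.inverse (1 + (T z - R₀))) x)
    rw [← isUnit_one_add_iff_det (R₀ * Ring.inverse (1 + (T z - R₀))) hmem]
    constructor
    · intro h
      have h2 : 1 + R₀ * Ring.inverse (1 + (T z - R₀))
          = (1 + T z) * Ring.inverse (1 + (T z - R₀)) := by
        rw [← hfact, mul_assoc, Ring.mul_inverse_cancel _ hD, mul_one]
      rw [h2]
      exact h.mul hWunit
    · intro h
      rw [← hfact]
      exact h.mul hD
end

section
/- Let m ≥ 1, d ≥ 1, and write points of ℝ^{m+d} as (x, y) with x ∈ ℝᵐ, y ∈ ℝᵈ; ∂_{y_j} denotes the derivative in the j-th y-variable. Let g : ℝ^{m+d} → ℝ be C² with g > 0 everywhere, let V : ℝ^{m+d} → ℂ be a function, let u : ℝ^{m+d} → ℂ be C², let k ∈ ℂᵈ and λ ∈ ℂ. Set v = g^{−1/2} u and W(λ) = g^{−1} ( Δg/2 − |∇g|²/(4g) + V + λ(g − 1) ). Then, pointwise on ℝ^{m+d}: −div(g ∇v) − 2i g Σ_{j=1}^d k_j ∂_{y_j} v − i (Σ_{j=1}^d k_j ∂_{y_j} g) v + (Σ_{j=1}^d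 k_j²) g v + (V − λ) v = g^{1/2} ( −Δu − 2i Σ_{j=1}^d k_j ∂_{y_j} u + (Σ_{j=1}^d k_j²) u + (W(λ) − λ) u ). -/
open Complex

/-- Partial derivative in the `i`-th variable. -/
noncomputable def pd {N : ℕ} {V : Type*} [NormedAddCommGroup V] [NormedSpace ℝ V]
    (i : Fin N) (F : (Fin N → ℝ) → V) (x : Fin N → ℝ) : V :=
  deriv (fun t => F (Function.update x i t)) (x i)

lemma pd_line {N : ℕ} {E : Type*} [NormedAddCommGroup E] [NormedSpace ℝ E]
    (i : Fin N) (F : (Fin N → ℝ) → E) (x : Fin N → ℝ) (t : ℝ) :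
    pd i F (Function.update x i t) = deriv (fun s => F (Function.update x i s)) t := by
  simp only [pd, Function.update_idem, Function.update_self]

lemma pd_pd {N : ℕ} {E : Type*} [NormedAddCommGroup E] [NormedSpace ℝ E]
    (i : Fin N) (F : (Fin N → ℝ) → E) (x : Fin N → ℝ) :
    pd i (pd i F) x = deriv (deriv (fun t => F (Function.update x i t))) (x i) := by
  have h : (fun t => pd i F (Function.update x i t))
      = deriv (fun s => F (Function.update x i s)) := funext (pd_line i F x)
  show deriv (fun t => pd i F (Function.update x i t)) (x i) = _
  rw [h]

section core

variable (G : ℝ → ℝ) (U : ℝ → ℂ)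

lemma core1 (hG : ContDiff ℝ 2 G) (hGpos : ∀ t, 0 < G t) (hU : ContDiff ℝ 2 U) (t : ℝ) :
    HasDerivAt (fun s => ((Real.sqrt (G s) : ℝ) : ℂ)⁻¹ * U s)
      (-(((deriv G t : ℝ) : ℂ) / (2 * ((Real.sqrt (G t) : ℝ) : ℂ) ^ 3)) * U t
        + ((Real.sqrt (G t) : ℝ) : ℂ)⁻¹ * deriv U t) t := by
  have hsq : Real.sqrt (G t) ≠ 0 := (Real.sqrt_pos.mpr (hGpos t)).ne'
  have hsqC : ((Real.sqrt (G t) : ℝ) : ℂ) ≠ 0 := by exact_mod_cast hsq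
  have hGd : HasDerivAt G (deriv G t) t :=
    ((hG.differentiable (by norm_num)) t).hasDerivAt
  have hs : HasDerivAt (fun s => Real.sqrt (G s))
      (1 / (2 * Real.sqrt (G t)) * deriv G t) t :=
    (Real.hasDerivAt_sqrt (hGpos t).ne').comp t hGd
  have hsC : HasDerivAt (fun s => ((Real.sqrt (G s) : ℝ) : ℂ))
      (((1 / (2 * Real.sqrt (G t)) * deriv G t : ℝ) : ℂ)) t := hs.ofReal_comp
  have hinv : HasDerivAt (fun s => ((Real.sqrt (G s) : ℝ) : ℂ)⁻¹)
      (-(((Real.sqrt (G t) : ℝ) : ℂ) ^ 2)⁻¹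
        * ((1 / (2 * Real.sqrt (G t)) * deriv G t : ℝ) : ℂ)) t := by
    have h := (hasDerivAt_inv hsqC).comp t hsC
    simpa [Function.comp_def] using h
  have hUd : HasDerivAt U (deriv U t) t :=
    ((hU.differentiable (by norm_num)) t).hasDerivAt
  have h := hinv.mul hUd
  simp only [Pi.mul_def] at h
  refine h.congr_deriv ?_
  have hs2 : ((Real.sqrt (G t) : ℝ) : ℂ) ^ 2 = ((G t : ℝ) : ℂ) := by
    rw [← Complex.ofReal_pow, Real.sq_sqrt (hGpos t).le]
  push_cast
  field_simp [hsqC]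

lemma core1' (hG : ContDiff ℝ 2 G) (hGpos : ∀ t, 0 < G t) (hU : ContDiff ℝ 2 U) (t : ℝ) :
    deriv (fun s => ((Real.sqrt (G s) : ℝ) : ℂ)⁻¹ * U s) t
      = -(((deriv G t : ℝ) : ℂ) / (2 * ((Real.sqrt (G t) : ℝ) : ℂ) ^ 3)) * U t
        + ((Real.sqrt (G t) : ℝ) : ℂ)⁻¹ * deriv U t :=
  (core1 G U hG hGpos hU t).deriv

lemma core2 (hG : ContDiff ℝ 2 G) (hGpos : ∀ t, 0 < G t) (hU : ContDiff ℝ 2 U) (t : ℝ) :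
    deriv (fun s => ((G s : ℝ) : ℂ) *
        deriv (fun r => ((Real.sqrt (G r) : ℝ) : ℂ)⁻¹ * U r) s) t
      = ((Real.sqrt (G t) : ℝ) : ℂ) * deriv (deriv U) t
        - ((deriv (deriv G) t : ℝ) : ℂ) / (2 * ((Real.sqrt (G t) : ℝ) : ℂ)) * U t
        + ((deriv G t : ℝ) : ℂ) ^ 2 / (4 * ((Real.sqrt (G t) : ℝ) : ℂ) ^ 3) * U t := by
  have hG2 : ContDiff ℝ (1 + 1) G := by
    rw [show ((1 : WithTop ℕ∞) + 1) = 2 from by norm_num]; exact hG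
  have hU2 : ContDiff ℝ (1 + 1) U := by
    rw [show ((1 : WithTop ℕ∞) + 1) = 2 from by norm_num]; exact hU
  have hG' : ContDiff ℝ 1 (deriv G) := (contDiff_succ_iff_deriv.mp hG2).2.2
  have hU' : ContDiff ℝ 1 (deriv U) := (contDiff_succ_iff_deriv.mp hU2).2.2
  -- rewrite the function inside the outer deriv
  have hfun : (fun s => ((G s : ℝ) : ℂ) *
        deriv (fun r => ((Real.sqrt (G r) : ℝ) : ℂ)⁻¹ * U r) s)
      = fun s => (-(1/2) : ℂ) * (((deriv G s : ℝ) : ℂ) * ((Real.sqrt (G s) : ℝ) : ℂ)⁻¹ * U s)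
          + ((Real.sqrt (G s) : ℝ) : ℂ) * deriv U s := by
    funext s
    rw [core1' G U hG hGpos hU s]
    have hsq : Real.sqrt (G s) ≠ 0 := (Real.sqrt_pos.mpr (hGpos s)).ne'
    have hsqC : ((Real.sqrt (G s) : ℝ) : ℂ) ≠ 0 := by exact_mod_cast hsq
    have hs2 : ((Real.sqrt (G s) : ℝ) : ℂ) ^ 2 = ((G s : ℝ) : ℂ) := by
      rw [← Complex.ofReal_pow, Real.sq_sqrt (hGpos s).le]
    rw [← hs2]
    field_simp
  rw [hfun]
  -- now compute the derivative of the rewritten function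
  have hsq : Real.sqrt (G t) ≠ 0 := (Real.sqrt_pos.mpr (hGpos t)).ne'
  have hsqC : ((Real.sqrt (G t) : ℝ) : ℂ) ≠ 0 := by exact_mod_cast hsq
  have hGd : HasDerivAt G (deriv G t) t :=
    ((hG.differentiable (by norm_num)) t).hasDerivAt
  have hs : HasDerivAt (fun s => Real.sqrt (G s))
      (1 / (2 * Real.sqrt (G t)) * deriv G t) t :=
    (Real.hasDerivAt_sqrt (hGpos t).ne').comp t hGd
  have hsC : HasDerivAt (fun s => ((Real.sqrt (G s) : ℝ) : ℂ))
      (((1 / (2 * Real.sqrt (G t)) * deriv G t : ℝ) : ℂ)) t := hs.ofReal_comp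
  have hinv : HasDerivAt (fun s => ((Real.sqrt (G s) : ℝ) : ℂ)⁻¹)
      (-(((Real.sqrt (G t) : ℝ) : ℂ) ^ 2)⁻¹
        * ((1 / (2 * Real.sqrt (G t)) * deriv G t : ℝ) : ℂ)) t := by
    have h := (hasDerivAt_inv hsqC).comp t hsC
    simpa [Function.comp_def] using h
  have hA : HasDerivAt (fun s => ((deriv G s : ℝ) : ℂ))
      (((deriv (deriv G) t : ℝ) : ℂ)) t :=
    (((hG'.differentiable one_ne_zero) t).hasDerivAt).ofReal_comp
  have hUd : HasDerivAt U (deriv U t) t :=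
    ((hU.differentiable (by norm_num)) t).hasDerivAt
  have hB : HasDerivAt (deriv U) (deriv (deriv U) t) t :=
    ((hU'.differentiable one_ne_zero) t).hasDerivAt
  have h := (((hA.mul hinv).mul hUd).const_mul ((-(1/2) : ℂ))).add (hsC.mul hB)
  simp only [Pi.mul_def, Pi.add_def] at h
  rw [h.deriv]
  have hs2 : ((Real.sqrt (G t) : ℝ) : ℂ) ^ 2 = ((G t : ℝ) : ℂ) := by
    rw [← Complex.ofReal_pow, Real.sq_sqrt (hGpos t).le]
  push_cast
  field_simp [hsqC]
  have h5 : ((Real.sqrt (G t) : ℝ) : ℂ) ^ 5 * (((Real.sqrt (G t) : ℝ) : ℂ))⁻¹ ^ 5 = 1 := by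
    rw [← mul_pow, mul_inv_cancel₀ hsqC, one_pow]
  ring

end core

lemma final_alg (S ux Vx lam K SP SB SA T1 T2 : ℂ) (hS0 : S ≠ 0) :
    -(S * SP - SB / (2 * S) * ux + SA / (4 * S ^ 3) * ux)
      - 2 * I * S ^ 2 * (-(ux / (2 * S ^ 3)) * T1 + S⁻¹ * T2)
      - I * T1 * (S⁻¹ * ux)
      + K * S ^ 2 * (S⁻¹ * ux)
      + (Vx - lam) * (S⁻¹ * ux)
    = S * (-SP - 2 * I * T2 + K * ux
        + ((S ^ 2)⁻¹ * (SB / 2 - SA / (4 * S ^ 2) + Vx + lam * (S ^ 2 - 1)) - lam) * ux) := by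
  field_simp [hS0]
  have h9 : S ^ 9 * S⁻¹ ^ 9 = 1 := by
    rw [← mul_pow, mul_inv_cancel₀ hS0, one_pow]
  ring

theorem stmt9 (m d : ℕ) (hm : 1 ≤ m) (hd : 1 ≤ d)
    (g : (Fin (m + d) → ℝ) → ℝ) (hg : ContDiff ℝ 2 g) (hgpos : ∀ x, 0 < g x)
    (V : (Fin (m + d) → ℝ) → ℂ)
    (u : (Fin (m + d) → ℝ) → ℂ) (hu : ContDiff ℝ 2 u)
    (k : Fin d → ℂ) (lam : ℂ)
    (v : (Fin (m + d) → ℝ) → ℂ)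
    (hv : ∀ x, v x = ((Real.sqrt (g x) : ℝ) : ℂ)⁻¹ * u x)
    (Wl : (Fin (m + d) → ℝ) → ℂ)
    (hWl : ∀ x, Wl x = ((g x : ℝ) : ℂ)⁻¹ *
      ((((∑ i : Fin (m + d), pd i (pd i g) x) : ℝ) : ℂ) / 2
        - (((∑ i : Fin (m + d), (pd i g x) ^ 2) : ℝ) : ℂ) / (4 * ((g x : ℝ) : ℂ))
        + V x + lam * (((g x : ℝ) : ℂ) - 1))) :
    ∀ x : Fin (m + d) → ℝ,
      -(∑ i : Fin (m + d), pd i (fun x' => ((g x' : ℝ) : ℂ) * pd i v x') x)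
        - 2 * I * ((g x : ℝ) : ℂ) * (∑ j : Fin d, k j * pd (Fin.natAdd m j) v x)
        - I * (∑ j : Fin d, k j * ((pd (Fin.natAdd m j) g x : ℝ) : ℂ)) * v x
        + (∑ j : Fin d, (k j) ^ 2) * ((g x : ℝ) : ℂ) * v x
        + (V x - lam) * v x
      = ((Real.sqrt (g x) : ℝ) : ℂ) *
        (-(∑ i : Fin (m + d), pd i (pd i u) x)
          - 2 * I * (∑ j : Fin d, k j * pd (Fin.natAdd m j) u x)
          + (∑ j : Fin d, (k j) ^ 2) * u x
          + (Wl x - lam) * u x) := by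
  intro x
  set S : ℂ := ((Real.sqrt (g x) : ℝ) : ℂ) with hSdef
  have hsq : Real.sqrt (g x) ≠ 0 := (Real.sqrt_pos.mpr (hgpos x)).ne'
  have hS0 : S ≠ 0 := by rw [hSdef]; exact_mod_cast hsq
  have hS2 : S ^ 2 = ((g x : ℝ) : ℂ) := by
    rw [hSdef, ← Complex.ofReal_pow, Real.sq_sqrt (hgpos x).le]
  -- line setup for each direction i
  have keyG : ∀ i : Fin (m + d), ContDiff ℝ 2 (fun t => g (Function.update x i t)) :=
    fun i => hg.comp (contDiff_update 2 x i)
  have keyU : ∀ i : Fin (m + d), ContDiff ℝ 2 (fun t => u (Function.update x i t)) :=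
    fun i => hu.comp (contDiff_update 2 x i)
  -- second-order identity, direction i
  have key1 : ∀ i : Fin (m + d),
      pd i (fun x' => ((g x' : ℝ) : ℂ) * pd i v x') x
        = S * pd i (pd i u) x
          - ((pd i (pd i g) x : ℝ) : ℂ) / (2 * S) * u x
          + ((pd i g x : ℝ) : ℂ) ^ 2 / (4 * S ^ 3) * u x := by
    intro i
    set G : ℝ → ℝ := fun t => g (Function.update x i t) with hGdef
    set U : ℝ → ℂ := fun t => u (Function.update x i t) with hUdef
    have hGpos : ∀ t, 0 < G t := fun t => hgpos _
    have hvline : ∀ s : ℝ, v (Function.update x i s)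
        = ((Real.sqrt (G s) : ℝ) : ℂ)⁻¹ * U s := fun s => hv _
    have hLHS : pd i (fun x' => ((g x' : ℝ) : ℂ) * pd i v x') x
        = deriv (fun t => ((G t : ℝ) : ℂ) *
            deriv (fun s => ((Real.sqrt (G s) : ℝ) : ℂ)⁻¹ * U s) t) (x i) := by
      show deriv (fun t => ((g (Function.update x i t) : ℝ) : ℂ)
          * pd i v (Function.update x i t)) (x i) = _
      congr 1
      funext t
      rw [pd_line]
      have h2 : (fun s => v (Function.update x i s))
          = fun s => ((Real.sqrt (G s) : ℝ) : ℂ)⁻¹ * U s := funext hvline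
      rw [h2]
    rw [hLHS, core2 G U (keyG i) hGpos (keyU i)]
    have e1 : pd i g x = deriv G (x i) := rfl
    have e2 : pd i (pd i g) x = deriv (deriv G) (x i) := pd_pd i g x
    have e3 : pd i (pd i u) x = deriv (deriv U) (x i) := pd_pd i u x
    have e4 : G (x i) = g x := by rw [hGdef]; simp [Function.update_eq_self]
    have e5 : U (x i) = u x := by rw [hUdef]; simp [Function.update_eq_self]
    rw [e1, e2, e3, e4, e5, hSdef]
  -- first-order identity, direction natAdd m j
  have key2 : ∀ j : Fin d,
      pd (Fin.natAdd m j) v x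
        = -(((pd (Fin.natAdd m j) g x : ℝ) : ℂ) / (2 * S ^ 3)) * u x
          + S⁻¹ * pd (Fin.natAdd m j) u x := by
    intro j
    set i := Fin.natAdd m j
    set G : ℝ → ℝ := fun t => g (Function.update x i t) with hGdef
    set U : ℝ → ℂ := fun t => u (Function.update x i t) with hUdef
    have hGpos : ∀ t, 0 < G t := fun t => hgpos _
    have hLHS : pd i v x
        = deriv (fun s => ((Real.sqrt (G s) : ℝ) : ℂ)⁻¹ * U s) (x i) := by
      show deriv (fun s => v (Function.update x i s)) (x i) = _
      have h2 : (fun s => v (Function.update x i s))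
          = fun s => ((Real.sqrt (G s) : ℝ) : ℂ)⁻¹ * U s := funext (fun s => hv _)
      rw [h2]
    rw [hLHS, core1' G U (keyG i) hGpos (keyU i)]
    have e1 : pd i g x = deriv G (x i) := rfl
    have e1' : pd i u x = deriv U (x i) := rfl
    have e4 : G (x i) = g x := by rw [hGdef]; simp [Function.update_eq_self]
    have e5 : U (x i) = u x := by rw [hUdef]; simp [Function.update_eq_self]
    rw [e1, e1', e4, e5, hSdef]
  -- sum manipulations
  have hsum1 : ∑ i : Fin (m + d), pd i (fun x' => ((g x' : ℝ) : ℂ) * pd i v x') x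
      = S * (∑ i : Fin (m + d), pd i (pd i u) x)
        - (((∑ i : Fin (m + d), pd i (pd i g) x : ℝ) : ℂ)) / (2 * S) * u x
        + (((∑ i : Fin (m + d), (pd i g x) ^ 2 : ℝ) : ℂ)) / (4 * S ^ 3) * u x := by
    calc ∑ i : Fin (m + d), pd i (fun x' => ((g x' : ℝ) : ℂ) * pd i v x') x
        = ∑ i : Fin (m + d), (S * pd i (pd i u) x
            - ((pd i (pd i g) x : ℝ) : ℂ) / (2 * S) * u x
            + ((pd i g x : ℝ) : ℂ) ^ 2 / (4 * S ^ 3) * u x) :=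
          Finset.sum_congr rfl (fun i _ => key1 i)
      _ = _ := by
          rw [Finset.sum_add_distrib, Finset.sum_sub_distrib, ← Finset.mul_sum,
            ← Finset.sum_mul, ← Finset.sum_mul, ← Finset.sum_div, ← Finset.sum_div]
          push_cast
          ring
  have hsum2 : ∑ j : Fin d, k j * pd (Fin.natAdd m j) v x
      = -(u x / (2 * S ^ 3)) * (∑ j : Fin d, k j * ((pd (Fin.natAdd m j) g x : ℝ) : ℂ))
        + S⁻¹ * (∑ j : Fin d, k j * pd (Fin.natAdd m j) u x) := by
    calc ∑ j : Fin d, k j * pd (Fin.natAdd m j) v x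
        = ∑ j : Fin d, (-(u x / (2 * S ^ 3)) * (k j * ((pd (Fin.natAdd m j) g x : ℝ) : ℂ))
            + S⁻¹ * (k j * pd (Fin.natAdd m j) u x)) :=
          Finset.sum_congr rfl (fun j _ => by rw [key2 j]; ring)
      _ = _ := by
          rw [Finset.sum_add_distrib, ← Finset.mul_sum, ← Finset.mul_sum]
  rw [hsum1, hsum2, hWl x, hv x, ← hSdef, ← hS2]
  exact final_alg S (u x) (V x) lam _ _ _ _ _ _ hS0
end

section
/- Let d ≥ 1, let U be an open subset of ℝᵈ, let a < b be real numbers, and let f : U × (a, b) → ℝ be real-analytic on the open set U × (a, b) ⊂ ℝ^{d+1}. Let Λ ⊂ (a, b) have Lebesgue measure zero. Then the set {k ∈ U : there exists λ ∈ Λ such that f(k, λ) = 0 and ∂f/∂k₁(k, λ) ≠ 0} has Lebesgue measure zero in ℝᵈ. -/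
open MeasureTheory Set

lemma aux_slice_null {d : ℕ} (i₀ : Fin d) {Λ' : Set ℝ} (hm : MeasurableSet Λ')
    (h0 : volume Λ' = 0) : volume {x : Fin d → ℝ | x i₀ ∈ Λ'} = 0 := by
  classical
  have hEq : {x : Fin d → ℝ | x i₀ ∈ Λ'} =
      Set.pi Set.univ (fun j => if j = i₀ then Λ' else Set.univ) := by
    ext x
    simp only [Set.mem_pi, Set.mem_univ, forall_true_left, Set.mem_setOf_eq]
    constructor
    · intro h j
      by_cases hj : j = i₀ <;> simp [hj, h]
    · intro h
      simpa using h i₀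
  rw [hEq, volume_pi_pi]
  exact Finset.prod_eq_zero (Finset.mem_univ i₀) (by simp [h0])

set_option maxHeartbeats 2000000 in
theorem stmt11 (d : ℕ) (hd : 1 ≤ d) (U : Set (Fin d → ℝ)) (hU : IsOpen U)
    (a b : ℝ) (hab : a < b)
    (f : (Fin d → ℝ) × ℝ → ℝ)
    (hf : AnalyticOnNhd ℝ f (U ×ˢ Ioo a b))
    (Λ : Set ℝ) (hΛsub : Λ ⊆ Ioo a b) (hΛ : volume Λ = 0) :
    volume {k ∈ U | ∃ lam ∈ Λ, f (k, lam) = 0 ∧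
      deriv (fun t => f (Function.update k (⟨0, by omega⟩ : Fin d) t, lam))
        (k ⟨0, by omega⟩) ≠ 0} = 0 := by
  classical
  set i₀ : Fin d := ⟨0, by omega⟩ with hi₀
  obtain ⟨Λ', hΛΛ', hΛ'm, hΛ'0⟩ := exists_measurable_superset_of_null hΛ
  set w : (Fin d → ℝ) × ℝ := (Pi.single i₀ 1, 0) with hw
  set T : Set ((Fin d → ℝ) × ℝ) :=
    {p | p ∈ U ×ˢ Ioo a b ∧ p.2 ∈ Λ ∧ f p = 0 ∧ fderiv ℝ f p w ≠ 0} with hT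
  -- the curve computations
  have hcurve : ∀ (k : Fin d → ℝ) (lam : ℝ),
      (fun t => (Function.update k i₀ t, lam)) = fun t => (k, lam) + (t - k i₀) • w := by
    intro k lam
    funext t
    refine Prod.ext ?_ ?_
    · funext j
      by_cases hj : j = i₀ <;>
        simp [hw, Function.update_apply, Pi.single_apply, hj]
    · simp [hw]
  have hderiv_eq : ∀ (k : Fin d → ℝ) (lam : ℝ), AnalyticAt ℝ f (k, lam) →
      deriv (fun t => f (Function.update k i₀ t, lam)) (k i₀) = fderiv ℝ f (k, lam) w := by
    intro k lam hA
    have hγ : HasDerivAt (fun t => (k, lam) + (t - k i₀) • w) w (k i₀) := by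
      simpa using (((hasDerivAt_id (k i₀)).sub_const (k i₀)).smul_const w).const_add (k, lam)
    have hγval : (k, lam) + ((k i₀) - k i₀) • w = (k, lam) := by simp
    have hF : HasFDerivAt f (fderiv ℝ f (k, lam)) (k, lam) := hA.differentiableAt.hasFDerivAt
    have hcomp : HasDerivAt (fun t => f ((k, lam) + (t - k i₀) • w))
        (fderiv ℝ f (k, lam) w) (k i₀) := by
      refine HasFDerivAt.comp_hasDerivAt _ ?_ hγ
      rw [hγval]; exact hF
    have heq : (fun t => f (Function.update k i₀ t, lam)) =
        fun t => f ((k, lam) + (t - k i₀) • w) :=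
      funext fun t => congrArg f (congrFun (hcurve k lam) t)
    rw [heq]
    exact hcomp.deriv
  -- the key local lemma
  have key : ∀ p₀ ∈ T, ∃ N ∈ nhds p₀, volume (Prod.fst '' (T ∩ N)) = 0 := by
    intro p₀ hp₀
    obtain ⟨hp₀V, -, -, hD⟩ := hp₀
    have hA : AnalyticAt ℝ f p₀ := hf p₀ hp₀V
    set f' := fderiv ℝ f p₀ with hf'
    have hsf : HasStrictFDerivAt f f' p₀ := hA.hasStrictFDerivAt
    set c : ((Fin d → ℝ) × ℝ) →L[ℝ] ℝ :=
      (ContinuousLinearMap.proj i₀).comp (ContinuousLinearMap.fst ℝ (Fin d → ℝ) ℝ) with hc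
    have hcapp : ∀ q : (Fin d → ℝ) × ℝ, c q = q.1 i₀ := fun q => rfl
    set D : ℝ := f' w with hDdef
    have hcw : c w = 1 := by simp [hcapp, hw]
    set Φ' : ((Fin d → ℝ) × ℝ) →L[ℝ] ((Fin d → ℝ) × ℝ) :=
      ContinuousLinearMap.id ℝ _ + (f' - c).smulRight w with hΦ'
    set Ψ' : ((Fin d → ℝ) × ℝ) →L[ℝ] ((Fin d → ℝ) × ℝ) :=
      ContinuousLinearMap.id ℝ _ + (D⁻¹ • (c - f')).smulRight w with hΨ'
    have hΦ'app : ∀ x, Φ' x = x + (f' x - c x) • w := by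
      intro x; simp [hΦ']
    have hΨ'app : ∀ x, Ψ' x = x + (D⁻¹ * (c x - f' x)) • w := by
      intro x; simp [hΨ', smul_eq_mul]
    have hleft : Function.LeftInverse Ψ' Φ' := by
      intro x
      rw [hΦ'app, hΨ'app]
      have h2 : c (x + (f' x - c x) • w) = f' x := by
        rw [map_add, _root_.map_smul, hcw]; simp
      have h3 : f' (x + (f' x - c x) • w) = f' x + (f' x - c x) * D := by
        rw [map_add, _root_.map_smul, ← hDdef]; simp [smul_eq_mul]
      rw [h2, h3]
      have hcoef : D⁻¹ * (f' x - (f' x + (f' x - c x) * D)) = -(f' x - c x) := by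
        field_simp
        ring
      rw [hcoef, add_assoc, ← add_smul]
      simp
    have hright : Function.RightInverse Ψ' Φ' := by
      intro x
      rw [hΨ'app, hΦ'app]
      have h2 : c (x + (D⁻¹ * (c x - f' x)) • w) = c x + D⁻¹ * (c x - f' x) := by
        rw [map_add, _root_.map_smul, hcw]; simp [smul_eq_mul]
      have h3 : f' (x + (D⁻¹ * (c x - f' x)) • w) = f' x + (D⁻¹ * (c x - f' x)) * D := by
        rw [map_add, _root_.map_smul, ← hDdef]; simp [smul_eq_mul]
      rw [h2, h3]
      have hcoef : f' x + D⁻¹ * (c x - f' x) * D - (c x + D⁻¹ * (c x - f' x)) =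
          -(D⁻¹ * (c x - f' x)) := by
        field_simp
        ring
      rw [hcoef, add_assoc, ← add_smul]
      simp
    set Φe : ((Fin d → ℝ) × ℝ) ≃L[ℝ] ((Fin d → ℝ) × ℝ) :=
      ContinuousLinearEquiv.equivOfInverse Φ' Ψ' hleft hright with hΦe
    set Φ : ((Fin d → ℝ) × ℝ) → ((Fin d → ℝ) × ℝ) := fun p => p + (f p - c p) • w with hΦdef
    have hΦs : HasStrictFDerivAt Φ (Φe : ((Fin d → ℝ) × ℝ) →L[ℝ] ((Fin d → ℝ) × ℝ)) p₀ := by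
      have hcoe : (Φe : ((Fin d → ℝ) × ℝ) →L[ℝ] ((Fin d → ℝ) × ℝ)) = Φ' := rfl
      rw [hcoe, hΦ']
      exact (hasStrictFDerivAt_id p₀).add ((hsf.sub c.hasStrictFDerivAt).smul_const w)
    have hlinv : HasStrictFDerivAt (hΦs.localInverse Φ Φe p₀)
        (Φe.symm : ((Fin d → ℝ) × ℝ) →L[ℝ] ((Fin d → ℝ) × ℝ)) (Φ p₀) := hΦs.to_localInverse
    set linv := hΦs.localInverse Φ Φe p₀ with hlinvdef
    obtain ⟨K, s, hs, hK⟩ := hlinv.exists_lipschitzOnWith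
    have hev : ∀ᶠ p in nhds p₀, linv (Φ p) = p := hΦs.eventually_left_inverse
    have hΦcont : ContinuousAt Φ p₀ := hΦs.continuousAt
    refine ⟨{p | linv (Φ p) = p} ∩ Φ ⁻¹' s,
      Filter.inter_mem hev (hΦcont.preimage_mem_nhds hs), ?_⟩
    set A : Set ((Fin d → ℝ) × ℝ) := {q | q.1 i₀ = 0 ∧ q.2 ∈ Λ'} with hAdef
    have hΦ1 : ∀ p, (Φ p).1 i₀ = f p := by
      intro p
      simp [hΦdef, hw, Pi.single_eq_same, hcapp]
    have hΦ2 : ∀ p, (Φ p).2 = p.2 := by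
      intro p; simp [hΦdef, hw]
    have hsub : Prod.fst '' (T ∩ ({p | linv (Φ p) = p} ∩ Φ ⁻¹' s)) ⊆
        (Prod.fst ∘ linv) '' (A ∩ s) := by
      rintro - ⟨p, ⟨⟨hpV, hpΛ, hpf, -⟩, hpfix, hps⟩, rfl⟩
      refine ⟨Φ p, ⟨⟨?_, ?_⟩, hps⟩, ?_⟩
      · rw [hΦ1, hpf]
      · rw [hΦ2]; exact hΛΛ' hpΛ
      · show (Prod.fst ∘ linv) (Φ p) = p.1
        rw [Function.comp_apply, hpfix]
    refine measure_mono_null hsub ?_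
    have hgl : LipschitzOnWith (1 * K) (Prod.fst ∘ linv) (A ∩ s) :=
      (LipschitzWith.prod_fst.comp_lipschitzOnWith hK).mono inter_subset_right
    haveI : Nonempty (Fin d) := ⟨i₀⟩
    have hEqvol : (volume : Measure (Fin d → ℝ)) = μH[(d : ℝ)] := by
      have h := MeasureTheory.hausdorffMeasure_pi_real (ι := Fin d)
      rw [Fintype.card_fin] at h
      exact h.symm
    -- A has d-dimensional Hausdorff measure zero
    set ψ : (Fin d → ℝ) →L[ℝ] ((Fin d → ℝ) × ℝ) :=
      (ContinuousLinearMap.id ℝ (Fin d → ℝ) -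
        (ContinuousLinearMap.proj i₀).smulRight (Pi.single i₀ 1 : Fin d → ℝ)).prod
        (ContinuousLinearMap.proj i₀) with hψdef
    have hψapp : ∀ x : Fin d → ℝ, ψ x = (x - (x i₀) • (Pi.single i₀ 1 : Fin d → ℝ), x i₀) := by
      intro x; simp [hψdef]
    have hAψ : A ⊆ ψ '' {x : Fin d → ℝ | x i₀ ∈ Λ'} := by
      rintro ⟨k, l⟩ ⟨hk0, hlΛ⟩
      refine ⟨k + l • (Pi.single i₀ 1 : Fin d → ℝ), ?_, ?_⟩
      · show (k + l • (Pi.single i₀ 1 : Fin d → ℝ)) i₀ ∈ Λ'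
        have hk0' : k i₀ = 0 := hk0
        simpa [Pi.single_eq_same, hk0'] using hlΛ
      · rw [hψapp]
        have hk0' : k i₀ = 0 := hk0
        refine Prod.ext ?_ ?_
        · show k + l • (Pi.single i₀ 1 : Fin d → ℝ) - ((k + l • (Pi.single i₀ 1 : Fin d → ℝ)) i₀) • (Pi.single i₀ 1 : Fin d → ℝ) = k
          have : (k + l • (Pi.single i₀ 1 : Fin d → ℝ)) i₀ = l := by
            simp [Pi.single_eq_same, hk0']
          rw [this]; abel
        · show (k + l • (Pi.single i₀ 1 : Fin d → ℝ)) i₀ = l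
          simp [Pi.single_eq_same, hk0']
    have hB0 : volume {x : Fin d → ℝ | x i₀ ∈ Λ'} = 0 := aux_slice_null i₀ hΛ'm hΛ'0
    have hA0 : μH[(d : ℝ)] A = 0 := by
      refine measure_mono_null hAψ ?_
      have hle := (ψ.lipschitz).hausdorffMeasure_image_le
        (by positivity : (0:ℝ) ≤ d) {x : Fin d → ℝ | x i₀ ∈ Λ'}
      refine le_antisymm (hle.trans ?_) zero_le
      rw [← hEqvol, hB0, mul_zero]
    have himg := hgl.hausdorffMeasure_image_le (by positivity : (0:ℝ) ≤ d)
    rw [hEqvol]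
    refine le_antisymm (himg.trans ?_) zero_le
    have hAs0 : μH[(d : ℝ)] (A ∩ s) = 0 := measure_mono_null inter_subset_left hA0
    rw [hAs0, mul_zero]
  -- assemble via a countable cover
  choose! N hN1 hN2 using key
  obtain ⟨t, htT, htc, hcov⟩ := TopologicalSpace.countable_cover_nhdsWithin
    (fun p hp => nhdsWithin_le_nhds (hN1 p hp))
  refine measure_mono_null ?_
    ((measure_biUnion_null_iff htc).2 fun p hp => hN2 p (htT hp))
  intro k hk
  obtain ⟨hkU, lam, hlam, hfz, hder⟩ := hk
  have hmem : (k, lam) ∈ U ×ˢ Ioo a b := ⟨hkU, hΛsub hlam⟩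
  have hA : AnalyticAt ℝ f (k, lam) := hf _ hmem
  have hkT : (k, lam) ∈ T := by
    refine ⟨hmem, hlam, hfz, ?_⟩
    rw [← hderiv_eq k lam hA]
    exact hder
  obtain ⟨p, hpt, hpN⟩ := Set.mem_iUnion₂.1 (hcov hkT)
  exact Set.mem_biUnion hpt ⟨(k, lam), ⟨hkT, hpN⟩, rfl⟩
end
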